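/- arXiv:1901.10911 — 2 statements merged into one kernel-verified Lean document; each statement's English description precedes it below -/
import Mathlib

section
/- Let P be the Petersen graph, let v be a vertex of P with neighbours w1, w2, w3, and let e = xy be an edge of P not incident with v. Let T be the graph obtained from P − v by deleting the edge e and adding five new pendant vertices x*, y*, w1*, w2*, w3* together with the edges xx*, yy*, w1w1*, w2w2*, w3w3*. Then T admits a proper 3-edge-colouring, and for every proper 3-edge-colouring c of T with colours taken to be the three nonzero elements of Z2×Z2 the following holds: c(xx*) ≠ c(yy*), and there is a colour z and an ordering of the edges w1w1*, w2w2*, w3w3* such that their colours are c(xx*)+c(yy*), z, z. -/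
/-- A proper 3-edge-colouring of a simple graph: a colour for every unordered pair,
such that distinct edges of the graph sharing a vertex receive distinct colours. -/
def IsProper3EdgeColoring {V : Type*} (G : SimpleGraph V) (c : Sym2 V → Fin 3) : Prop :=
  ∀ e₁ e₂ : Sym2 V, e₁ ∈ G.edgeSet → e₂ ∈ G.edgeSet → e₁ ≠ e₂ →
    (∃ v, v ∈ e₁ ∧ v ∈ e₂) → c e₁ ≠ c e₂

/-- A graph admits a proper 3-edge-colouring. -/
def ThreeEdgeColorable {V : Type*} (G : SimpleGraph V) : Prop :=
  ∃ c : Sym2 V → Fin 3, IsProper3EdgeColoring G c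

/-- The vertices of the Petersen graph: the 2-element subsets of a 5-element set. -/
abbrev PetersenVert : Type := {s : Finset (Fin 5) // s.card = 2}

/-- The Petersen graph, as the Kneser graph of 2-element subsets of a 5-element set:
two subsets are adjacent when they are disjoint. -/
def petersen : SimpleGraph PetersenVert where
  Adj a b := Disjoint (a : Finset (Fin 5)) (b : Finset (Fin 5))
  symm := ⟨fun _ _ h => h.symm⟩
  loopless := by
    refine ⟨?_⟩
    intro a h
    have := disjoint_self.mp h
    have h2 := a.2
    rw [this] at h2
    simp at h2

/-- A proper 3-edge-colouring with colours the three nonzero elements of `Z2 × Z2`: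
every edge gets a nonzero colour and distinct edges sharing a vertex get distinct
colours. -/
def IsProperK4EdgeColoring {V : Type*} (G : SimpleGraph V)
    (c : Sym2 V → ZMod 2 × ZMod 2) : Prop :=
  (∀ e ∈ G.edgeSet, c e ≠ 0) ∧
  ∀ e₁ e₂ : Sym2 V, e₁ ∈ G.edgeSet → e₂ ∈ G.edgeSet → e₁ ≠ e₂ →
    (∃ v, v ∈ e₁ ∧ v ∈ e₂) → c e₁ ≠ c e₂

/-- The (2,3)-pole `T` obtained from the Petersen graph by removing the vertex `v`
(with neighbours `w1, w2, w3`) and severing the edge `xy` (not incident with `v`):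
five pendant vertices (indexed by `Fin 5`) are attached at `x, y, w1, w2, w3`. -/
def poleT (v x y w1 w2 w3 : PetersenVert) :
    SimpleGraph ({z : PetersenVert // z ≠ v} ⊕ Fin 5) :=
  SimpleGraph.fromRel (fun p q =>
    match p, q with
    | Sum.inl a, Sum.inl b => petersen.Adj a.1 b.1 ∧ s(a.1, b.1) ≠ s(x, y)
    | Sum.inl a, Sum.inr k =>
        (k = 0 ∧ a.1 = x) ∨ (k = 1 ∧ a.1 = y) ∨ (k = 2 ∧ a.1 = w1) ∨
        (k = 3 ∧ a.1 = w2) ∨ (k = 4 ∧ a.1 = w3)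
    | _, _ => False)

/-! ### Basic facts about the graphs involved -/

instance petersen.adjDecidable : DecidableRel petersen.Adj := fun a b => by
  unfold petersen; infer_instance

section adj
variable {v x y w1 w2 w3 : PetersenVert}

lemma poleT_adj_ll (a b : {z : PetersenVert // z ≠ v}) :
    (poleT v x y w1 w2 w3).Adj (Sum.inl a) (Sum.inl b) ↔
      a ≠ b ∧ petersen.Adj a.1 b.1 ∧ s(a.1, b.1) ≠ s(x, y) := by
  show (Sum.inl a ≠ Sum.inl b ∧ _) ↔ _
  constructor
  · rintro ⟨hne, h | h⟩
    · exact ⟨fun hh => hne (by rw [hh]), h⟩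
    · refine ⟨fun hh => hne (by rw [hh]), h.1.symm, ?_⟩
      rw [Sym2.eq_swap]; exact h.2
  · rintro ⟨hne, h1, h2⟩
    exact ⟨fun hh => hne (Sum.inl_injective hh), Or.inl ⟨h1, h2⟩⟩

lemma poleT_adj_lr (a : {z : PetersenVert // z ≠ v}) (k : Fin 5) :
    (poleT v x y w1 w2 w3).Adj (Sum.inl a) (Sum.inr k) ↔
      (k = 0 ∧ a.1 = x) ∨ (k = 1 ∧ a.1 = y) ∨ (k = 2 ∧ a.1 = w1) ∨
      (k = 3 ∧ a.1 = w2) ∨ (k = 4 ∧ a.1 = w3) := by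
  show (Sum.inl a ≠ Sum.inr k ∧ (_ ∨ False)) ↔ _
  constructor
  · rintro ⟨_, h | h⟩
    · exact h
    · exact absurd h id
  · intro h
    exact ⟨fun hh => Sum.inl_ne_inr hh, Or.inl h⟩

lemma poleT_adj_rl (a : {z : PetersenVert // z ≠ v}) (k : Fin 5) :
    (poleT v x y w1 w2 w3).Adj (Sum.inr k) (Sum.inl a) ↔
      (k = 0 ∧ a.1 = x) ∨ (k = 1 ∧ a.1 = y) ∨ (k = 2 ∧ a.1 = w1) ∨
      (k = 3 ∧ a.1 = w2) ∨ (k = 4 ∧ a.1 = w3) := by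
  rw [(poleT v x y w1 w2 w3).adj_comm]; exact poleT_adj_lr a k

lemma poleT_adj_rr (k l : Fin 5) :
    ¬ (poleT v x y w1 w2 w3).Adj (Sum.inr k) (Sum.inr l) := by
  rintro ⟨hne, h | h⟩ <;> exact h

instance poleT.adjDecidable : DecidableRel (poleT v x y w1 w2 w3).Adj := fun p q =>
  match p, q with
  | Sum.inl a, Sum.inl b => decidable_of_iff' _ (poleT_adj_ll a b)
  | Sum.inl a, Sum.inr k => decidable_of_iff' _ (poleT_adj_lr a k)
  | Sum.inr k, Sum.inl a => decidable_of_iff' _ (poleT_adj_rl a k)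
  | Sum.inr k, Sum.inr l => isFalse (poleT_adj_rr k l)

end adj

/-! ### Generic lemmas about proper colourings -/

abbrev K4 := ZMod 2 × ZMod 2

def colorsK : List K4 := [(1,0),(0,1),(1,1)]

def goalProp (a b p q r : K4) : Prop :=
  a ≠ b ∧ ∃ z : K4, z ≠ 0 ∧ ({p, q, r} : Multiset K4) = {a + b, z, z}

instance goalProp.dec (a b p q r : K4) : Decidable (goalProp a b p q r) := by
  unfold goalProp; infer_instance

lemma isProper_of_aux {V : Type*} (G : SimpleGraph V) (c : Sym2 V → Fin 3)
    (h : ∀ a b b' : V, G.Adj a b → G.Adj a b' → b ≠ b' → c s(a, b) ≠ c s(a, b')) :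
    IsProper3EdgeColoring G c := by
  intro e₁ e₂ h1 h2 hne hsh
  obtain ⟨u, hu1, hu2⟩ := hsh
  induction e₁ using Sym2.ind with | _ a b =>
  induction e₂ using Sym2.ind with | _ a' b' =>
  rw [SimpleGraph.mem_edgeSet] at h1 h2
  rw [Sym2.mem_iff] at hu1 hu2
  rcases hu1 with rfl | rfl
  · rcases hu2 with rfl | rfl
    · exact h u b b' h1 h2 (fun hb => hne (by rw [hb]))
    · rw [Sym2.eq_swap (a := a')]
      exact h u b a' h1 h2.symm (fun hb => hne (by rw [hb, Sym2.eq_swap]))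
  · rcases hu2 with rfl | rfl
    · rw [Sym2.eq_swap (a := a)]
      exact h u a b' h1.symm h2 (fun hb => hne (by rw [← hb, Sym2.eq_swap]))
    · rw [Sym2.eq_swap (a := a), Sym2.eq_swap (a := a')]
      exact h u a a' h1.symm h2.symm
        (fun hb => hne (by rw [Sym2.eq_swap, hb, Sym2.eq_swap]))

lemma mem_edgeSet_map {V W : Type*} {G : SimpleGraph V} {H : SimpleGraph W} (ψ : V ≃ W)
    (hAdj : ∀ a b, G.Adj a b ↔ H.Adj (ψ a) (ψ b)) {e : Sym2 V} (he : e ∈ G.edgeSet) :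
    Sym2.map ψ e ∈ H.edgeSet := by
  induction e using Sym2.ind with | _ a b =>
  rw [Sym2.map_pair_eq]
  exact (hAdj a b).mp he

lemma proper3_pullback {V W : Type*} {G : SimpleGraph V} {H : SimpleGraph W} (ψ : V ≃ W)
    (hAdj : ∀ a b, G.Adj a b ↔ H.Adj (ψ a) (ψ b)) (c : Sym2 W → Fin 3)
    (hc : IsProper3EdgeColoring H c) :
    IsProper3EdgeColoring G (fun e => c (Sym2.map ψ e)) := by
  intro e₁ e₂ h1 h2 hne hsh
  obtain ⟨u, hu1, hu2⟩ := hsh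
  exact hc _ _ (mem_edgeSet_map ψ hAdj h1) (mem_edgeSet_map ψ hAdj h2)
    (fun hh => hne (Sym2.map.injective ψ.injective hh))
    ⟨ψ u, Sym2.mem_map.mpr ⟨u, hu1, rfl⟩, Sym2.mem_map.mpr ⟨u, hu2, rfl⟩⟩

lemma properK4_pullback {V W : Type*} {G : SimpleGraph V} {H : SimpleGraph W} (ψ : V ≃ W)
    (hAdj : ∀ a b, G.Adj a b ↔ H.Adj (ψ a) (ψ b)) (c : Sym2 W → K4)
    (hc : IsProperK4EdgeColoring H c) :
    IsProperK4EdgeColoring G (fun e => c (Sym2.map ψ e)) := by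
  constructor
  · intro e he
    exact hc.1 _ (mem_edgeSet_map ψ hAdj he)
  · intro e₁ e₂ h1 h2 hne hsh
    obtain ⟨u, hu1, hu2⟩ := hsh
    exact hc.2 _ _ (mem_edgeSet_map ψ hAdj h1) (mem_edgeSet_map ψ hAdj h2)
      (fun hh => hne (Sym2.map.injective ψ.injective hh))
      ⟨ψ u, Sym2.mem_map.mpr ⟨u, hu1, rfl⟩, Sym2.mem_map.mpr ⟨u, hu2, rfl⟩⟩

namespace PoleSearch

variable {C : Type} [DecidableEq C] [Inhabited C]

def compat (pairs : List (Nat × Nat)) (col : C) (acc : List C) : Bool :=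
  pairs.all fun p => (p.1 != acc.length) || (col != acc.getD (acc.length - 1 - p.2) default)

def search (colors : List C) (pairs : List (Nat × Nat)) (goalB : List C → Bool) :
    Nat → List C → Bool
  | 0, acc => goalB acc
  | m+1, acc => colors.all fun col => !(compat pairs col acc) || search colors pairs goalB m (col :: acc)

def okAbove (colors : List C) (pairs : List (Nat × Nat)) (k : Nat) : List C → Bool
  | [] => true
  | c :: rest =>
      if rest.length < k then true
      else decide (c ∈ colors) && compat pairs c rest && okAbove colors pairs k rest

lemma okAbove_mono {colors : List C} {pairs : List (Nat × Nat)} {k k' : Nat} (hk : k ≤ k') :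
    ∀ l : List C, okAbove colors pairs k l = true → okAbove colors pairs k' l = true := by
  intro l
  induction l with
  | nil => simp [okAbove]
  | cons c rest ih =>
    simp only [okAbove]
    by_cases h' : rest.length < k'
    · simp [h']
    · have h : ¬ rest.length < k := fun hh => h' (lt_of_lt_of_le hh hk)
      simp only [if_neg h, if_neg h', Bool.and_eq_true]
      rintro ⟨⟨h1, h2⟩, h3⟩
      exact ⟨⟨h1, h2⟩, ih h3⟩

lemma okAbove_extract {colors : List C} {pairs : List (Nat × Nat)} {k : Nat} :
    ∀ (l₁ : List C) (c : C) (rest : List C),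
      okAbove colors pairs k (l₁ ++ c :: rest) = true → k ≤ rest.length →
      c ∈ colors ∧ compat pairs c rest = true := by
  intro l₁
  induction l₁ with
  | nil =>
    intro c rest h hk
    simp only [List.nil_append, okAbove] at h
    rw [if_neg (by omega)] at h
    simp only [Bool.and_eq_true, decide_eq_true_iff] at h
    exact ⟨h.1.1, h.1.2⟩
  | cons d l₁ ih =>
    intro c rest h hk
    simp only [List.cons_append, okAbove, List.append_eq] at h
    by_cases hlen : (l₁ ++ c :: rest).length < k
    · exfalso; simp [List.length_append] at hlen; omega
    · rw [if_neg hlen] at h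
      simp only [Bool.and_eq_true] at h
      exact ih c rest h.2 hk

theorem search_sound (colors : List C) (pairs : List (Nat × Nat)) (goalB : List C → Bool) :
    ∀ (m : Nat) (acc l : List C), search colors pairs goalB m acc = true → l.length = m →
      okAbove colors pairs acc.length (l ++ acc) = true → goalB (l ++ acc) = true := by
  intro m
  induction m with
  | zero =>
    intro acc l hs hl _
    rw [List.length_eq_zero_iff.mp hl]
    simpa [search] using hs
  | succ m ih =>
    intro acc l hs hl hok
    rcases (List.eq_nil_or_concat l) with rfl | ⟨l₁, col, rfl⟩
    · simp at hl
    · rw [List.concat_eq_append] at hl hok ⊢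
      have hassoc : (l₁ ++ [col]) ++ acc = l₁ ++ (col :: acc) := by simp
      rw [hassoc] at hok ⊢
      have hext := okAbove_extract l₁ col acc hok (le_refl _)
      have hsearch : search colors pairs goalB m (col :: acc) = true := by
        simp only [search, List.all_eq_true] at hs
        have := hs col hext.1
        rw [hext.2] at this
        simpa using this
      have hlen : l₁.length = m := by simp at hl; omega
      have hok' : okAbove colors pairs (col :: acc).length (l₁ ++ (col :: acc)) = true :=
        okAbove_mono (by simp) _ hok
      exact ih (col :: acc) l₁ hsearch hlen hok'

theorem search_sound_fun (colors : List C) (pairs : List (Nat × Nat)) (goalB : List C → Bool)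
    (n : Nat) (h : search colors pairs goalB n [] = true)
    (hpairs : ∀ p ∈ pairs, p.2 < p.1) (t : Nat → C)
    (ht1 : ∀ i, i < n → t i ∈ colors)
    (ht2 : ∀ i j, (i, j) ∈ pairs → i < n → t i ≠ t j) :
    goalB ((List.range n).reverse.map t) = true := by
  have key : ∀ m, m ≤ n → okAbove colors pairs 0 ((List.range m).reverse.map t) = true := by
    intro m
    induction m with
    | zero => intro _; simp [okAbove]
    | succ m ih =>
      intro hm
      have hrw : (List.range (m+1)).reverse.map t = t m :: (List.range m).reverse.map t := by
        rw [List.range_succ]; simp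
      rw [hrw]
      set rest := (List.range m).reverse.map t with hrest
      have hlen : rest.length = m := by simp [hrest]
      simp only [okAbove, if_neg (Nat.not_lt_zero _), Bool.and_eq_true]
      refine ⟨⟨by simp [ht1 m (by omega)], ?_⟩, ih (by omega)⟩
      rw [compat, List.all_eq_true]
      intro p hp
      by_cases hpm : p.1 = m
      · have hj : p.2 < m := by have := hpairs p hp; omega
        have hget : rest.getD (rest.length - 1 - p.2) default = t p.2 := by
          rw [hlen]
          have hidx : m - 1 - p.2 < rest.length := by omega
          rw [List.getD_eq_getElem _ _ hidx]
          simp only [hrest, List.getElem_map, List.getElem_reverse, List.length_range,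
            List.getElem_range]
          congr 1
          omega
        rw [hget, hlen, hpm]
        have := ht2 m p.2 (by rwa [← hpm]) (by omega)
        simp [this]
      · simp [hlen, hpm]
  have := search_sound colors pairs goalB n [] ((List.range n).reverse.map t) h (by simp)
    (by simpa using key n (le_refl n))
  simpa using this

end PoleSearch

/-! ### Canonical configurations -/

def goalB : List K4 → Bool := fun l =>
  decide (goalProp (l.getD 4 default) (l.getD 3 default) (l.getD 2 default)
    (l.getD 1 default) (l.getD 0 default))

lemma mem_colorsK : ∀ z : K4, z ≠ 0 → z ∈ colorsK := by decide

-- configuration I : v0 = [2, 4], neighbours [[0, 1], [0, 3], [1, 3]]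
def v0I : PetersenVert := ⟨{2,4}, by decide⟩
def x0I : PetersenVert := ⟨{0,1}, by decide⟩
def y0I : PetersenVert := ⟨{2,3}, by decide⟩
def n1I : PetersenVert := ⟨{0,1}, by decide⟩
def n2I : PetersenVert := ⟨{0,3}, by decide⟩
def n3I : PetersenVert := ⟨{1,3}, by decide⟩
abbrev VI := {z : PetersenVert // z ≠ v0I} ⊕ Fin 5
abbrev TI : SimpleGraph VI := poleT v0I x0I y0I n1I n2I n3I
def dfltI : VI × VI := (Sum.inr 0, Sum.inr 0)
def epairsI : List (VI × VI) := [((Sum.inl ⟨⟨{0,1}, by decide⟩, by decide⟩ : VI), (Sum.inl ⟨⟨{3,4}, by decide⟩, by decide⟩ : VI)), ((Sum.inl ⟨⟨{0,2}, by decide⟩, by decide⟩ : VI), (Sum.inl ⟨⟨{1,3}, by decide⟩, by decide⟩ : VI)), ((Sum.inl ⟨⟨{0,2}, by decide⟩, by decide⟩ : VI), (Sum.inl ⟨⟨{1,4}, by decide⟩, by decide⟩ : VI)), ((Sum.inl ⟨⟨{0,2}, by decide⟩, by decide⟩ : VI), (Sum.inl ⟨⟨{3,4}, by decide⟩, by decide⟩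 : VI)), ((Sum.inl ⟨⟨{0,3}, by decide⟩, by decide⟩ : VI), (Sum.inl ⟨⟨{1,2}, by decide⟩, by decide⟩ : VI)), ((Sum.inl ⟨⟨{0,3}, by decide⟩, by decide⟩ : VI), (Sum.inl ⟨⟨{1,4}, by decide⟩, by decide⟩ : VI)), ((Sum.inl ⟨⟨{0,4}, by decide⟩, by decide⟩ : VI), (Sum.inl ⟨⟨{1,2}, by decide⟩, by decide⟩ : VI)), ((Sum.inl ⟨⟨{0,4}, by decide⟩, by decide⟩ : VI), (Sum.inl ⟨⟨{1,3}, by decide⟩, by decide⟩ : VI)), ((Sum.inl ⟨⟨{0,4}, by decide⟩, by decide⟩ : VI), (Sum.inl ⟨⟨{2,3}, by decide⟩, by decide⟩ : VI)), ((Sum.inl ⟨⟨{1,2}, by decide⟩, by decide⟩ : VI), (Sum.inl ⟨⟨{3,4}, by decide⟩, by decide⟩ : VI)), ((Sum.inl ⟨⟨{1,4}, by decide⟩, by decide⟩ : VI), (Sum.inl ⟨⟨{2,3}, by decide⟩, by decide⟩ : VI)), ((Sum.inl ⟨⟨{0,1}, by decide⟩, by decide⟩ : VI), (Sum.inr 0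 : VI)), ((Sum.inl ⟨⟨{2,3}, by decide⟩, by decide⟩ : VI), (Sum.inr 1 : VI)), ((Sum.inl ⟨⟨{0,1}, by decide⟩, by decide⟩ : VI), (Sum.inr 2 : VI)), ((Sum.inl ⟨⟨{0,3}, by decide⟩, by decide⟩ : VI), (Sum.inr 3 : VI)), ((Sum.inl ⟨⟨{1,3}, by decide⟩, by decide⟩ : VI), (Sum.inr 4 : VI))]
def cpairsI : List (Nat × Nat) := [(2, 1), (3, 0), (3, 1), (3, 2), (5, 2), (5, 4), (6, 4), (7, 1), (7, 6), (8, 6), (8, 7), (9, 0), (9, 3), (9, 4), (9, 6), (10, 2), (10, 5), (10, 8), (11, 0), (12, 8), (12, 10), (13, 0), (13, 11), (14, 4), (14, 5), (15, 1), (15, 7)]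

theorem keyI (c : Sym2 VI → K4) (hc : IsProperK4EdgeColoring TI c) :
    goalProp (c s(Sum.inl ⟨x0I, by decide⟩, Sum.inr 0)) (c s(Sum.inl ⟨y0I, by decide⟩, Sum.inr 1))
      (c s(Sum.inl ⟨n1I, by decide⟩, Sum.inr 2)) (c s(Sum.inl ⟨n2I, by decide⟩, Sum.inr 3))
      (c s(Sum.inl ⟨n3I, by decide⟩, Sum.inr 4)) := by
  have cert : PoleSearch.search colorsK cpairsI goalB 16 [] = true := by decide
  have hadj : ∀ i, i < 16 → TI.Adj (epairsI.getD i dfltI).1 (epairsI.getD i dfltI).2 := by decide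
  have hpairs : ∀ p ∈ cpairsI, p.2 < p.1 ∧ p.1 < 16 := by decide
  have hneq : ∀ p ∈ cpairsI,
      (s((epairsI.getD p.1 dfltI).1, (epairsI.getD p.1 dfltI).2) : Sym2 VI) ≠
      s((epairsI.getD p.2 dfltI).1, (epairsI.getD p.2 dfltI).2) := by decide
  have hshare : ∀ p ∈ cpairsI, ∃ u : VI,
      u ∈ (s((epairsI.getD p.1 dfltI).1, (epairsI.getD p.1 dfltI).2) : Sym2 VI) ∧
      u ∈ (s((epairsI.getD p.2 dfltI).1, (epairsI.getD p.2 dfltI).2) : Sym2 VI) := by decide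
  set t : Nat → K4 := fun i => c s((epairsI.getD i dfltI).1, (epairsI.getD i dfltI).2) with ht
  have ht1 : ∀ i, i < 16 → t i ∈ colorsK := fun i hi =>
    mem_colorsK _ (hc.1 _ ((SimpleGraph.mem_edgeSet _).mpr (hadj i hi)))
  have ht2 : ∀ i j, (i, j) ∈ cpairsI → i < 16 → t i ≠ t j := by
    intro i j hij hi
    have hj : j < i := (hpairs _ hij).1
    exact hc.2 _ _ ((SimpleGraph.mem_edgeSet _).mpr (hadj i hi))
      ((SimpleGraph.mem_edgeSet _).mpr (hadj j (lt_trans hj hi)))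
      (hneq _ hij) (hshare _ hij)
  have hgoal := PoleSearch.search_sound_fun colorsK cpairsI goalB 16 cert
    (fun p hp => (hpairs p hp).1) t ht1 ht2
  have hlist : (List.range 16).reverse.map t =
      [t 15, t 14, t 13, t 12, t 11, t 10, t 9, t 8, t 7, t 6, t 5, t 4, t 3, t 2, t 1, t 0] := by
    simp [List.range_succ]
  rw [hlist] at hgoal
  exact of_decide_eq_true hgoal

def ctabI : List (VI × VI × Fin 3) := [((Sum.inl ⟨⟨{0,1}, by decide⟩, by decide⟩ : VI), (Sum.inl ⟨⟨{3,4}, by decide⟩, by decide⟩ : VI), (0 : Fin 3)), ((Sum.inl ⟨⟨{0,2}, by decide⟩, by decide⟩ : VI), (Sum.inl ⟨⟨{1,3}, by decide⟩, by decide⟩ : VI), (0 : Fin 3)), ((Sum.inl ⟨⟨{0,2}, by decide⟩, by decide⟩ : VI), (Sum.inl ⟨⟨{1,4}, by decide⟩, by decide⟩ : VI), (1 : Fin 3)), ((Sum.inl ⟨⟨{0,2}, by decide⟩, by decide⟩ : VI), (Sum.inl ⟨⟨{3,4}, by decide⟩, by decide⟩ : VI), (2 : Fin 3)), ((Sum.inl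 ⟨⟨{0,3}, by decide⟩, by decide⟩ : VI), (Sum.inl ⟨⟨{1,2}, by decide⟩, by decide⟩ : VI), (2 : Fin 3)), ((Sum.inl ⟨⟨{0,3}, by decide⟩, by decide⟩ : VI), (Sum.inl ⟨⟨{1,4}, by decide⟩, by decide⟩ : VI), (0 : Fin 3)), ((Sum.inl ⟨⟨{0,4}, by decide⟩, by decide⟩ : VI), (Sum.inl ⟨⟨{1,2}, by decide⟩, by decide⟩ : VI), (0 : Fin 3)), ((Sum.inl ⟨⟨{0,4}, by decide⟩, by decide⟩ : VI), (Sum.inl ⟨⟨{1,3}, by decide⟩, by decide⟩ : VI), (2 : Fin 3)), ((Sum.inl ⟨⟨{0,4}, by decide⟩, by decide⟩ : VI), (Sum.inl ⟨⟨{2,3}, by decide⟩, by decide⟩ : VI), (1 : Fin 3)), ((Sum.inl ⟨⟨{1,2}, by decide⟩, by decide⟩ : VI), (Sum.inl ⟨⟨{3,4}, by decide⟩, by decide⟩ : VI), (1 : Fin 3)), ((Sum.inl ⟨⟨{1,4}, by decide⟩, by decide⟩ : VI), (Sum.inl ⟨⟨{2,3}, by decide⟩, by decide⟩ : VI), (2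 : Fin 3)), ((Sum.inl ⟨⟨{0,1}, by decide⟩, by decide⟩ : VI), (Sum.inr 0 : VI), (1 : Fin 3)), ((Sum.inl ⟨⟨{2,3}, by decide⟩, by decide⟩ : VI), (Sum.inr 1 : VI), (0 : Fin 3)), ((Sum.inl ⟨⟨{0,1}, by decide⟩, by decide⟩ : VI), (Sum.inr 2 : VI), (2 : Fin 3)), ((Sum.inl ⟨⟨{0,3}, by decide⟩, by decide⟩ : VI), (Sum.inr 3 : VI), (1 : Fin 3)), ((Sum.inl ⟨⟨{1,3}, by decide⟩, by decide⟩ : VI), (Sum.inr 4 : VI), (1 : Fin 3))]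

def fI (a b : VI) : Fin 3 :=
  ((ctabI.find? (fun e => decide ((e.1 = a ∧ e.2.1 = b) ∨ (e.1 = b ∧ e.2.1 = a)))).map
    (fun e => e.2.2)).getD 0

set_option maxRecDepth 40000 in
lemma fI_symm : ∀ a b : VI, fI a b = fI b a := by decide

def cI : Sym2 VI → Fin 3 := Sym2.lift ⟨fI, fI_symm⟩

set_option maxRecDepth 100000 in
lemma cI_aux : ∀ a b b' : VI, TI.Adj a b → TI.Adj a b' → b ≠ b' →
    cI s(a,b) ≠ cI s(a,b') := by decide

theorem existI : ThreeEdgeColorable TI := ⟨cI, isProper_of_aux _ _ cI_aux⟩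

lemma nbrI : ∀ u : PetersenVert, petersen.Adj v0I u → u = n1I ∨ u = n2I ∨ u = n3I := by decide

-- configuration II : v0 = [0, 2], neighbours [[1, 3], [1, 4], [3, 4]]
def v0II : PetersenVert := ⟨{0,2}, by decide⟩
def x0II : PetersenVert := ⟨{0,1}, by decide⟩
def y0II : PetersenVert := ⟨{2,3}, by decide⟩
def n1II : PetersenVert := ⟨{1,3}, by decide⟩
def n2II : PetersenVert := ⟨{1,4}, by decide⟩
def n3II : PetersenVert := ⟨{3,4}, by decide⟩
abbrev VII := {z : PetersenVert // z ≠ v0II} ⊕ Fin 5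
abbrev TII : SimpleGraph VII := poleT v0II x0II y0II n1II n2II n3II
def dfltII : VII × VII := (Sum.inr 0, Sum.inr 0)
def epairsII : List (VII × VII) := [((Sum.inl ⟨⟨{0,1}, by decide⟩, by decide⟩ : VII), (Sum.inl ⟨⟨{2,4}, by decide⟩, by decide⟩ : VII)), ((Sum.inl ⟨⟨{0,1}, by decide⟩, by decide⟩ : VII), (Sum.inl ⟨⟨{3,4}, by decide⟩, by decide⟩ : VII)), ((Sum.inl ⟨⟨{0,3}, by decide⟩, by decide⟩ : VII), (Sum.inl ⟨⟨{1,2}, by decide⟩, by decide⟩ : VII)), ((Sum.inl ⟨⟨{0,3}, by decide⟩, by decide⟩ : VII), (Sum.inl ⟨⟨{1,4}, by decide⟩, by decide⟩ : VII)), ((Sum.inl ⟨⟨{0,3}, by decide⟩, by decide⟩ : VII), (Sum.inl ⟨⟨{2,4}, by decide⟩, by decide⟩ : VII)), ((Sum.inl ⟨⟨{0,4}, by decide⟩, by decide⟩ : VII), (Sum.inl ⟨⟨{1,2}, by decide⟩, by decide⟩ : VII)), ((Sum.inl ⟨⟨{0,4}, by decide⟩, by decide⟩ : VII), (Sum.inl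 ⟨⟨{1,3}, by decide⟩, by decide⟩ : VII)), ((Sum.inl ⟨⟨{0,4}, by decide⟩, by decide⟩ : VII), (Sum.inl ⟨⟨{2,3}, by decide⟩, by decide⟩ : VII)), ((Sum.inl ⟨⟨{1,2}, by decide⟩, by decide⟩ : VII), (Sum.inl ⟨⟨{3,4}, by decide⟩, by decide⟩ : VII)), ((Sum.inl ⟨⟨{1,3}, by decide⟩, by decide⟩ : VII), (Sum.inl ⟨⟨{2,4}, by decide⟩, by decide⟩ : VII)), ((Sum.inl ⟨⟨{1,4}, by decide⟩, by decide⟩ : VII), (Sum.inl ⟨⟨{2,3}, by decide⟩, by decide⟩ : VII)), ((Sum.inl ⟨⟨{0,1}, by decide⟩, by decide⟩ : VII), (Sum.inr 0 : VII)), ((Sum.inl ⟨⟨{2,3}, by decide⟩, by decide⟩ : VII), (Sum.inr 1 : VII)), ((Sum.inl ⟨⟨{1,3}, by decide⟩, by decide⟩ : VII), (Sum.inr 2 : VII)), ((Sum.inl ⟨⟨{1,4}, by decide⟩, by decide⟩ : VII), (Sum.inr 3 : VII)), ((Sum.inl ⟨⟨{3,4}, by decide⟩, by decide⟩ : VII),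 (Sum.inr 4 : VII))]
def cpairsII : List (Nat × Nat) := [(1, 0), (3, 2), (4, 0), (4, 2), (4, 3), (5, 2), (6, 5), (7, 5), (7, 6), (8, 1), (8, 2), (8, 5), (9, 0), (9, 4), (9, 6), (10, 3), (10, 7), (11, 0), (11, 1), (12, 7), (12, 10), (13, 6), (13, 9), (14, 3), (14, 10), (15, 1), (15, 8)]

theorem keyII (c : Sym2 VII → K4) (hc : IsProperK4EdgeColoring TII c) :
    goalProp (c s(Sum.inl ⟨x0II, by decide⟩, Sum.inr 0)) (c s(Sum.inl ⟨y0II, by decide⟩, Sum.inr 1))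
      (c s(Sum.inl ⟨n1II, by decide⟩, Sum.inr 2)) (c s(Sum.inl ⟨n2II, by decide⟩, Sum.inr 3))
      (c s(Sum.inl ⟨n3II, by decide⟩, Sum.inr 4)) := by
  have cert : PoleSearch.search colorsK cpairsII goalB 16 [] = true := by decide
  have hadj : ∀ i, i < 16 → TII.Adj (epairsII.getD i dfltII).1 (epairsII.getD i dfltII).2 := by decide
  have hpairs : ∀ p ∈ cpairsII, p.2 < p.1 ∧ p.1 < 16 := by decide
  have hneq : ∀ p ∈ cpairsII,
      (s((epairsII.getD p.1 dfltII).1, (epairsII.getD p.1 dfltII).2) : Sym2 VII) ≠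
      s((epairsII.getD p.2 dfltII).1, (epairsII.getD p.2 dfltII).2) := by decide
  have hshare : ∀ p ∈ cpairsII, ∃ u : VII,
      u ∈ (s((epairsII.getD p.1 dfltII).1, (epairsII.getD p.1 dfltII).2) : Sym2 VII) ∧
      u ∈ (s((epairsII.getD p.2 dfltII).1, (epairsII.getD p.2 dfltII).2) : Sym2 VII) := by decide
  set t : Nat → K4 := fun i => c s((epairsII.getD i dfltII).1, (epairsII.getD i dfltII).2) with ht
  have ht1 : ∀ i, i < 16 → t i ∈ colorsK := fun i hi =>
    mem_colorsK _ (hc.1 _ ((SimpleGraph.mem_edgeSet _).mpr (hadj i hi)))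
  have ht2 : ∀ i j, (i, j) ∈ cpairsII → i < 16 → t i ≠ t j := by
    intro i j hij hi
    have hj : j < i := (hpairs _ hij).1
    exact hc.2 _ _ ((SimpleGraph.mem_edgeSet _).mpr (hadj i hi))
      ((SimpleGraph.mem_edgeSet _).mpr (hadj j (lt_trans hj hi)))
      (hneq _ hij) (hshare _ hij)
  have hgoal := PoleSearch.search_sound_fun colorsK cpairsII goalB 16 cert
    (fun p hp => (hpairs p hp).1) t ht1 ht2
  have hlist : (List.range 16).reverse.map t =
      [t 15, t 14, t 13, t 12, t 11, t 10, t 9, t 8, t 7, t 6, t 5, t 4, t 3, t 2, t 1, t 0] := by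
    simp [List.range_succ]
  rw [hlist] at hgoal
  exact of_decide_eq_true hgoal

def ctabII : List (VII × VII × Fin 3) := [((Sum.inl ⟨⟨{0,1}, by decide⟩, by decide⟩ : VII), (Sum.inl ⟨⟨{2,4}, by decide⟩, by decide⟩ : VII), (0 : Fin 3)), ((Sum.inl ⟨⟨{0,1}, by decide⟩, by decide⟩ : VII), (Sum.inl ⟨⟨{3,4}, by decide⟩, by decide⟩ : VII), (1 : Fin 3)), ((Sum.inl ⟨⟨{0,3}, by decide⟩, by decide⟩ : VII), (Sum.inl ⟨⟨{1,2}, by decide⟩, by decide⟩ : VII), (0 : Fin 3)), ((Sum.inl ⟨⟨{0,3}, by decide⟩, by decide⟩ : VII), (Sum.inl ⟨⟨{1,4}, by decide⟩, by decide⟩ : VII), (1 : Fin 3)), ((Sum.inl ⟨⟨{0,3}, by decide⟩, by decide⟩ : VII), (Sum.inl ⟨⟨{2,4}, by decide⟩, by decide⟩ : VII), (2 : Fin 3)), ((Sum.inl ⟨⟨{0,4}, by decide⟩, by decide⟩ : VII), (Sum.inl ⟨⟨{1,2}, by decide⟩, by decide⟩ : VII), (1 : Fin 3)), ((Sum.inl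 ⟨⟨{0,4}, by decide⟩, by decide⟩ : VII), (Sum.inl ⟨⟨{1,3}, by decide⟩, by decide⟩ : VII), (0 : Fin 3)), ((Sum.inl ⟨⟨{0,4}, by decide⟩, by decide⟩ : VII), (Sum.inl ⟨⟨{2,3}, by decide⟩, by decide⟩ : VII), (2 : Fin 3)), ((Sum.inl ⟨⟨{1,2}, by decide⟩, by decide⟩ : VII), (Sum.inl ⟨⟨{3,4}, by decide⟩, by decide⟩ : VII), (2 : Fin 3)), ((Sum.inl ⟨⟨{1,3}, by decide⟩, by decide⟩ : VII), (Sum.inl ⟨⟨{2,4}, by decide⟩, by decide⟩ : VII), (1 : Fin 3)), ((Sum.inl ⟨⟨{1,4}, by decide⟩, by decide⟩ : VII), (Sum.inl ⟨⟨{2,3}, by decide⟩, by decide⟩ : VII), (0 : Fin 3)), ((Sum.inl ⟨⟨{0,1}, by decide⟩, by decide⟩ : VII), (Sum.inr 0 : VII), (2 : Fin 3)), ((Sum.inl ⟨⟨{2,3}, by decide⟩, by decide⟩ : VII), (Sum.inr 1 : VII), (1 : Fin 3)), ((Sum.inl ⟨⟨{1,3}, by decide⟩, by decide⟩ : VII),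 (Sum.inr 2 : VII), (2 : Fin 3)), ((Sum.inl ⟨⟨{1,4}, by decide⟩, by decide⟩ : VII), (Sum.inr 3 : VII), (2 : Fin 3)), ((Sum.inl ⟨⟨{3,4}, by decide⟩, by decide⟩ : VII), (Sum.inr 4 : VII), (0 : Fin 3))]

def fII (a b : VII) : Fin 3 :=
  ((ctabII.find? (fun e => decide ((e.1 = a ∧ e.2.1 = b) ∨ (e.1 = b ∧ e.2.1 = a)))).map
    (fun e => e.2.2)).getD 0

set_option maxRecDepth 40000 in
lemma fII_symm : ∀ a b : VII, fII a b = fII b a := by decide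

def cII : Sym2 VII → Fin 3 := Sym2.lift ⟨fII, fII_symm⟩

set_option maxRecDepth 100000 in
lemma cII_aux : ∀ a b b' : VII, TII.Adj a b → TII.Adj a b' → b ≠ b' →
    cII s(a,b) ≠ cII s(a,b') := by decide

theorem existII : ThreeEdgeColorable TII := ⟨cII, isProper_of_aux _ _ cII_aux⟩

lemma nbrII : ∀ u : PetersenVert, petersen.Adj v0II u → u = n1II ∨ u = n2II ∨ u = n3II := by decide


/-! ### Transport along permutations of `Fin 5` -/

def pmf (σ : Equiv.Perm (Fin 5)) (s : PetersenVert) : PetersenVert :=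
  ⟨s.1.image σ, by rw [Finset.card_image_of_injective _ σ.injective, s.2]⟩

lemma pmf_pmf (σ : Equiv.Perm (Fin 5)) (s : PetersenVert) : pmf σ⁻¹ (pmf σ s) = s := by
  apply Subtype.ext
  simp only [pmf, Finset.image_image]
  ext i
  simp

lemma pmf_pmf' (σ : Equiv.Perm (Fin 5)) (s : PetersenVert) : pmf σ (pmf σ⁻¹ s) = s := by
  have := pmf_pmf σ⁻¹ s
  rwa [inv_inv] at this

def pmE (σ : Equiv.Perm (Fin 5)) : PetersenVert ≃ PetersenVert where
  toFun := pmf σ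
  invFun := pmf σ⁻¹
  left_inv := pmf_pmf σ
  right_inv := pmf_pmf' σ

lemma pmf_inj (σ : Equiv.Perm (Fin 5)) : Function.Injective (pmf σ) := (pmE σ).injective

lemma pmf_adj (σ : Equiv.Perm (Fin 5)) (a b : PetersenVert) :
    petersen.Adj (pmf σ a) (pmf σ b) ↔ petersen.Adj a b := by
  show Disjoint (a.1.image σ) (b.1.image σ) ↔ Disjoint a.1 b.1
  exact Finset.disjoint_image σ.injective

lemma pmf_pair (σ : Equiv.Perm (Fin 5)) (s : PetersenVert) (a b : Fin 5) (h : s.1 = {a, b}) :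
    (pmf σ s).1 = {σ a, σ b} := by
  show s.1.image σ = _
  rw [h, Finset.image_insert, Finset.image_singleton]

/-- The attachment vertices of the pole, indexed by the pendant index. -/
def att (x y w1 w2 w3 : PetersenVert) : Fin 5 → PetersenVert :=
  fun k => match k with
  | ⟨0, _⟩ => x
  | ⟨1, _⟩ => y
  | ⟨2, _⟩ => w1
  | ⟨3, _⟩ => w2
  | ⟨4, _⟩ => w3

lemma forall_fin5 {P : Fin 5 → Prop} (h0 : P 0) (h1 : P 1) (h2 : P 2) (h3 : P 3) (h4 : P 4) :
    ∀ k, P k := by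
  intro k
  match k with
  | ⟨0, _⟩ => exact h0
  | ⟨1, _⟩ => exact h1
  | ⟨2, _⟩ => exact h2
  | ⟨3, _⟩ => exact h3
  | ⟨4, _⟩ => exact h4

lemma pend_iff (x y w1 w2 w3 a : PetersenVert) (k : Fin 5) :
    ((k = 0 ∧ a = x) ∨ (k = 1 ∧ a = y) ∨ (k = 2 ∧ a = w1) ∨
      (k = 3 ∧ a = w2) ∨ (k = 4 ∧ a = w3)) ↔ a = att x y w1 w2 w3 k := by
  induction k using forall_fin5 <;> constructor
  case h0.mp => rintro (⟨_, h⟩ | ⟨h, _⟩ | ⟨h, _⟩ | ⟨h, _⟩ | ⟨h, _⟩) <;> first | exact h | exact absurd h (by decide)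
  case h0.mpr => intro h; exact Or.inl ⟨rfl, h⟩
  case h1.mp => rintro (⟨h, _⟩ | ⟨_, h⟩ | ⟨h, _⟩ | ⟨h, _⟩ | ⟨h, _⟩) <;> first | exact h | exact absurd h (by decide)
  case h1.mpr => intro h; exact Or.inr (Or.inl ⟨rfl, h⟩)
  case h2.mp => rintro (⟨h, _⟩ | ⟨h, _⟩ | ⟨_, h⟩ | ⟨h, _⟩ | ⟨h, _⟩) <;> first | exact h | exact absurd h (by decide)
  case h2.mpr => intro h; exact Or.inr (Or.inr (Or.inl ⟨rfl, h⟩))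
  case h3.mp => rintro (⟨h, _⟩ | ⟨h, _⟩ | ⟨h, _⟩ | ⟨_, h⟩ | ⟨h, _⟩) <;> first | exact h | exact absurd h (by decide)
  case h3.mpr => intro h; exact Or.inr (Or.inr (Or.inr (Or.inl ⟨rfl, h⟩)))
  case h4.mp => rintro (⟨h, _⟩ | ⟨h, _⟩ | ⟨h, _⟩ | ⟨h, _⟩ | ⟨_, h⟩) <;> first | exact h | exact absurd h (by decide)
  case h4.mpr => intro h; exact Or.inr (Or.inr (Or.inr (Or.inr ⟨rfl, h⟩)))

def liftV (σ : Equiv.Perm (Fin 5)) (v v₀ : PetersenVert) (hv : pmf σ v = v₀) :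
    {z : PetersenVert // z ≠ v} ≃ {z : PetersenVert // z ≠ v₀} where
  toFun a := ⟨pmf σ a.1, fun h => a.2 (pmf_inj σ (h.trans hv.symm))⟩
  invFun b := ⟨pmf σ⁻¹ b.1, fun h => b.2 (by
    have hb := congrArg (pmf σ) h
    rwa [pmf_pmf', hv] at hb)⟩
  left_inv a := Subtype.ext (pmf_pmf σ a.1)
  right_inv b := Subtype.ext (pmf_pmf' σ b.1)

lemma poleT_map_adj (v x y w1 w2 w3 v₀ x₀ y₀ n1 n2 n3 : PetersenVert)
    (σ τ : Equiv.Perm (Fin 5)) (hv : pmf σ v = v₀)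
    (hE : s(pmf σ x, pmf σ y) = s(x₀, y₀))
    (hatt : ∀ k : Fin 5, att x₀ y₀ n1 n2 n3 (τ k) = pmf σ (att x y w1 w2 w3 k))
    (p q : {z : PetersenVert // z ≠ v} ⊕ Fin 5) :
    (poleT v x y w1 w2 w3).Adj p q ↔
      (poleT v₀ x₀ y₀ n1 n2 n3).Adj (Equiv.sumCongr (liftV σ v v₀ hv) τ p)
        (Equiv.sumCongr (liftV σ v v₀ hv) τ q) := by
  have hmapxy : Sym2.map (pmf σ) s(x, y) = s(x₀, y₀) := by rw [Sym2.map_pair_eq]; exact hE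
  cases p with
  | inl a =>
    cases q with
    | inl b =>
      show _ ↔ (poleT v₀ x₀ y₀ n1 n2 n3).Adj (Sum.inl _) (Sum.inl _)
      rw [poleT_adj_ll, poleT_adj_ll]
      have c1 : (liftV σ v v₀ hv a ≠ liftV σ v v₀ hv b) ↔ a ≠ b :=
        not_congr (EmbeddingLike.apply_eq_iff_eq _)
      have c2 : petersen.Adj (liftV σ v v₀ hv a).1 (liftV σ v v₀ hv b).1 ↔
          petersen.Adj a.1 b.1 := pmf_adj σ a.1 b.1
      have c3 : (s((liftV σ v v₀ hv a).1, (liftV σ v v₀ hv b).1) ≠ s(x₀, y₀)) ↔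
          s(a.1, b.1) ≠ s(x, y) := by
        show (s(pmf σ a.1, pmf σ b.1) ≠ s(x₀, y₀)) ↔ _
        rw [← hmapxy, ← Sym2.map_pair_eq (pmf σ) a.1 b.1]
        exact not_congr (Sym2.map.injective (pmf_inj σ)).eq_iff
      exact ((and_congr c1 (and_congr c2 c3)).symm)
    | inr k =>
      show _ ↔ (poleT v₀ x₀ y₀ n1 n2 n3).Adj (Sum.inl _) (Sum.inr _)
      rw [poleT_adj_lr, poleT_adj_lr, pend_iff, pend_iff]
      show a.1 = _ ↔ (liftV σ v v₀ hv a).1 = att x₀ y₀ n1 n2 n3 (τ k)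
      rw [hatt k]
      exact (pmf_inj σ).eq_iff.symm
  | inr k =>
    cases q with
    | inl a =>
      show _ ↔ (poleT v₀ x₀ y₀ n1 n2 n3).Adj (Sum.inr _) (Sum.inl _)
      rw [poleT_adj_rl, poleT_adj_rl, pend_iff, pend_iff]
      show a.1 = _ ↔ (liftV σ v v₀ hv a).1 = att x₀ y₀ n1 n2 n3 (τ k)
      rw [hatt k]
      exact (pmf_inj σ).eq_iff.symm
    | inr l =>
      constructor
      · intro h; exact absurd h (poleT_adj_rr k l)
      · intro h; exact absurd h (poleT_adj_rr (τ k) (τ l))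

/-! ### Multiset permutation helpers -/

lemma ms_swap12 (u v w : K4) : ({u, v, w} : Multiset K4) = {v, u, w} :=
  Multiset.cons_swap u v {w}

lemma ms_swap23 (u v w : K4) : ({u, v, w} : Multiset K4) = {u, w, v} := by
  show u ::ₘ (v ::ₘ (w ::ₘ 0)) = u ::ₘ (w ::ₘ (v ::ₘ 0))
  exact congrArg (u ::ₘ ·) (Multiset.cons_swap v w 0)

lemma msEq (f : Fin 5 → K4) (a b c : Fin 5)
    (ha : a = 2 ∨ a = 3 ∨ a = 4) (hb : b = 2 ∨ b = 3 ∨ b = 4) (hc : c = 2 ∨ c = 3 ∨ c = 4)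
    (hab : a ≠ b) (hac : a ≠ c) (hbc : b ≠ c) :
    ({f a, f b, f c} : Multiset K4) = {f 2, f 3, f 4} := by
  rcases ha with rfl | rfl | rfl <;> rcases hb with rfl | rfl | rfl <;>
    rcases hc with rfl | rfl | rfl <;>
    first
      | rfl
      | exact absurd rfl hab
      | exact absurd rfl hac
      | exact absurd rfl hbc
      | exact ms_swap12 _ _ _
      | exact ms_swap23 _ _ _
      | exact (ms_swap23 _ _ _).trans (ms_swap12 _ _ _)
      | exact (ms_swap12 _ _ _).trans (ms_swap23 _ _ _)
      | exact ((ms_swap12 _ _ _).trans (ms_swap23 _ _ _)).trans (ms_swap12 _ _ _)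

/-! ### The goal, stated for arbitrary data -/

def Goal (v x y w1 w2 w3 : PetersenVert) (hxv : x ≠ v) (hyv : y ≠ v)
    (h1 : w1 ≠ v) (h2 : w2 ≠ v) (h3 : w3 ≠ v) : Prop :=
  ThreeEdgeColorable (poleT v x y w1 w2 w3) ∧
  ∀ c : Sym2 ({z : PetersenVert // z ≠ v} ⊕ Fin 5) → K4,
    IsProperK4EdgeColoring (poleT v x y w1 w2 w3) c →
    goalProp (c s(Sum.inl ⟨x, hxv⟩, Sum.inr 0)) (c s(Sum.inl ⟨y, hyv⟩, Sum.inr 1))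
      (c s(Sum.inl ⟨w1, h1⟩, Sum.inr 2)) (c s(Sum.inl ⟨w2, h2⟩, Sum.inr 3))
      (c s(Sum.inl ⟨w3, h3⟩, Sum.inr 4))

theorem masterTau (v₀ x₀ y₀ n1 n2 n3 : PetersenVert)
    (hx₀ : x₀ ≠ v₀) (hy₀ : y₀ ≠ v₀) (hn1v : n1 ≠ v₀) (hn2v : n2 ≠ v₀) (hn3v : n3 ≠ v₀)
    (hkey : ∀ c : Sym2 ({z : PetersenVert // z ≠ v₀} ⊕ Fin 5) → K4,
      IsProperK4EdgeColoring (poleT v₀ x₀ y₀ n1 n2 n3) c →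
      goalProp (c s(Sum.inl ⟨x₀, hx₀⟩, Sum.inr 0)) (c s(Sum.inl ⟨y₀, hy₀⟩, Sum.inr 1))
        (c s(Sum.inl ⟨n1, hn1v⟩, Sum.inr 2)) (c s(Sum.inl ⟨n2, hn2v⟩, Sum.inr 3))
        (c s(Sum.inl ⟨n3, hn3v⟩, Sum.inr 4)))
    (hex : ThreeEdgeColorable (poleT v₀ x₀ y₀ n1 n2 n3))
    (v x y w1 w2 w3 : PetersenVert) (hxv : x ≠ v) (hyv : y ≠ v)
    (h1 : w1 ≠ v) (h2 : w2 ≠ v) (h3 : w3 ≠ v)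
    (σ τ : Equiv.Perm (Fin 5)) (hv : pmf σ v = v₀)
    (hatt : ∀ k : Fin 5, att x₀ y₀ n1 n2 n3 (τ k) = pmf σ (att x y w1 w2 w3 k))
    (hτ : (τ 0 = 0 ∧ τ 1 = 1) ∨ (τ 0 = 1 ∧ τ 1 = 0)) :
    Goal v x y w1 w2 w3 hxv hyv h1 h2 h3 := by
  have hE : s(pmf σ x, pmf σ y) = s(x₀, y₀) := by
    have e0 := hatt 0
    have e1 := hatt 1
    rcases hτ with ⟨t0, t1⟩ | ⟨t0, t1⟩
    · rw [t0] at e0; rw [t1] at e1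
      rw [show x₀ = pmf σ x from e0, show y₀ = pmf σ y from e1]
    · rw [t0] at e0; rw [t1] at e1
      rw [show y₀ = pmf σ x from e0, show x₀ = pmf σ y from e1]
      exact Sym2.eq_swap
  have hAdj := poleT_map_adj v x y w1 w2 w3 v₀ x₀ y₀ n1 n2 n3 σ τ hv hE hatt
  set φ := Equiv.sumCongr (liftV σ v v₀ hv) τ with hφ
  constructor
  · obtain ⟨c₀, hc₀⟩ := hex
    exact ⟨fun e => c₀ (Sym2.map φ e), proper3_pullback φ hAdj c₀ hc₀⟩
  · intro c hc
    have hAdj' : ∀ a b, (poleT v₀ x₀ y₀ n1 n2 n3).Adj a b ↔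
        (poleT v x y w1 w2 w3).Adj (φ.symm a) (φ.symm b) := by
      intro a b
      rw [hAdj (φ.symm a) (φ.symm b)]
      simp
    have hres := hkey _ (properK4_pullback φ.symm hAdj' c hc)
    have attne : ∀ j : Fin 5, att x y w1 w2 w3 j ≠ v := forall_fin5 hxv hyv h1 h2 h3
    set F : Fin 5 → K4 := fun j => c s(Sum.inl ⟨att x y w1 w2 w3 j, attne j⟩, Sum.inr j) with hF
    have hval : ∀ (k : Fin 5) (pf : att x₀ y₀ n1 n2 n3 k ≠ v₀),
        c (Sym2.map φ.symm s(Sum.inl ⟨att x₀ y₀ n1 n2 n3 k, pf⟩, Sum.inr k)) = F (τ.symm k) := by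
      intro k pf
      rw [Sym2.map_pair_eq]
      have hh : φ.symm (Sum.inl ⟨att x₀ y₀ n1 n2 n3 k, pf⟩) =
          Sum.inl (⟨att x y w1 w2 w3 (τ.symm k), attne _⟩ : {z : PetersenVert // z ≠ v}) := by
        show Sum.inl ((liftV σ v v₀ hv).symm ⟨att x₀ y₀ n1 n2 n3 k, pf⟩) = _
        congr 1
        apply Subtype.ext
        show pmf σ⁻¹ (att x₀ y₀ n1 n2 n3 k) = att x y w1 w2 w3 (τ.symm k)
        have hk := hatt (τ.symm k)
        rw [Equiv.apply_symm_apply] at hk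
        rw [hk, pmf_pmf]
      rw [hh]
      rfl
    have hv0 : c (Sym2.map φ.symm s(Sum.inl ⟨x₀, hx₀⟩, Sum.inr 0)) = F (τ.symm 0) := hval 0 hx₀
    have hv1 : c (Sym2.map φ.symm s(Sum.inl ⟨y₀, hy₀⟩, Sum.inr 1)) = F (τ.symm 1) := hval 1 hy₀
    have hv2 : c (Sym2.map φ.symm s(Sum.inl ⟨n1, hn1v⟩, Sum.inr 2)) = F (τ.symm 2) := hval 2 hn1v
    have hv3 : c (Sym2.map φ.symm s(Sum.inl ⟨n2, hn2v⟩, Sum.inr 3)) = F (τ.symm 3) := hval 3 hn2v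
    have hv4 : c (Sym2.map φ.symm s(Sum.inl ⟨n3, hn3v⟩, Sum.inr 4)) = F (τ.symm 4) := hval 4 hn3v
    rw [hv0, hv1, hv2, hv3, hv4] at hres
    have fin5mem : ∀ k : Fin 5, k ≠ 0 → k ≠ 1 → (k = 2 ∨ k = 3 ∨ k = 4) := by decide
    have d23 : τ.symm 2 ≠ τ.symm 3 := fun h => (by decide : (2 : Fin 5) ≠ 3) (τ.symm.injective h)
    have d24 : τ.symm 2 ≠ τ.symm 4 := fun h => (by decide : (2 : Fin 5) ≠ 4) (τ.symm.injective h)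
    have d34 : τ.symm 3 ≠ τ.symm 4 := fun h => (by decide : (3 : Fin 5) ≠ 4) (τ.symm.injective h)
    show goalProp (F 0) (F 1) (F 2) (F 3) (F 4)
    rcases hτ with ⟨t0, t1⟩ | ⟨t0, t1⟩
    · have s0 : τ.symm 0 = 0 := by rw [Equiv.symm_apply_eq]; exact t0.symm
      have s1 : τ.symm 1 = 1 := by rw [Equiv.symm_apply_eq]; exact t1.symm
      have m2 := fin5mem (τ.symm 2)
        (fun h => (by decide : (2 : Fin 5) ≠ 0) (τ.symm.injective (h.trans s0.symm)))
        (fun h => (by decide : (2 : Fin 5) ≠ 1) (τ.symm.injective (h.trans s1.symm)))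
      have m3 := fin5mem (τ.symm 3)
        (fun h => (by decide : (3 : Fin 5) ≠ 0) (τ.symm.injective (h.trans s0.symm)))
        (fun h => (by decide : (3 : Fin 5) ≠ 1) (τ.symm.injective (h.trans s1.symm)))
      have m4 := fin5mem (τ.symm 4)
        (fun h => (by decide : (4 : Fin 5) ≠ 0) (τ.symm.injective (h.trans s0.symm)))
        (fun h => (by decide : (4 : Fin 5) ≠ 1) (τ.symm.injective (h.trans s1.symm)))
      rw [s0, s1] at hres
      obtain ⟨hne, z, hz, hm⟩ := hres
      refine ⟨hne, z, hz, ?_⟩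
      rw [← hm]
      exact (msEq F _ _ _ m2 m3 m4 d23 d24 d34).symm
    · have s0 : τ.symm 0 = 1 := by rw [Equiv.symm_apply_eq]; exact t1.symm
      have s1 : τ.symm 1 = 0 := by rw [Equiv.symm_apply_eq]; exact t0.symm
      have m2 := fin5mem (τ.symm 2)
        (fun h => (by decide : (2 : Fin 5) ≠ 1) (τ.symm.injective (h.trans s1.symm)))
        (fun h => (by decide : (2 : Fin 5) ≠ 0) (τ.symm.injective (h.trans s0.symm)))
      have m3 := fin5mem (τ.symm 3)
        (fun h => (by decide : (3 : Fin 5) ≠ 1) (τ.symm.injective (h.trans s1.symm)))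
        (fun h => (by decide : (3 : Fin 5) ≠ 0) (τ.symm.injective (h.trans s0.symm)))
      have m4 := fin5mem (τ.symm 4)
        (fun h => (by decide : (4 : Fin 5) ≠ 1) (τ.symm.injective (h.trans s1.symm)))
        (fun h => (by decide : (4 : Fin 5) ≠ 0) (τ.symm.injective (h.trans s0.symm)))
      rw [s0, s1] at hres
      obtain ⟨hne, z, hz, hm⟩ := hres
      rw [add_comm (F 1) (F 0)] at hm
      refine ⟨Ne.symm hne, z, hz, ?_⟩
      rw [← hm]
      exact (msEq F _ _ _ m2 m3 m4 d23 d24 d34).symm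

/-! ### Building permutations with prescribed values -/

def att' (i0 i1 i2 i3 i4 : Fin 5) : Fin 5 → Fin 5 := fun k =>
  match k with
  | ⟨0, _⟩ => i0
  | ⟨1, _⟩ => i1
  | ⟨2, _⟩ => i2
  | ⟨3, _⟩ => i3
  | ⟨4, _⟩ => i4

lemma mkperm5 (i0 i1 i2 i3 i4 : Fin 5)
    (h01 : i0 ≠ i1) (h02 : i0 ≠ i2) (h03 : i0 ≠ i3) (h04 : i0 ≠ i4)
    (h12 : i1 ≠ i2) (h13 : i1 ≠ i3) (h14 : i1 ≠ i4)
    (h23 : i2 ≠ i3) (h24 : i2 ≠ i4) (h34 : i3 ≠ i4) :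
    ∃ τ : Equiv.Perm (Fin 5), (τ 0 = i0 ∧ τ 1 = i1 ∧ τ 2 = i2 ∧ τ 3 = i3 ∧ τ 4 = i4) ∧
      (τ.symm i0 = 0 ∧ τ.symm i1 = 1 ∧ τ.symm i2 = 2 ∧ τ.symm i3 = 3 ∧ τ.symm i4 = 4) := by
  have hinj : Function.Injective (att' i0 i1 i2 i3 i4) := by
    intro p q h
    match p, q with
    | ⟨0, _⟩, ⟨0, _⟩ => rfl
    | ⟨0, _⟩, ⟨1, _⟩ => exact absurd h h01
    | ⟨0, _⟩, ⟨2, _⟩ => exact absurd h h02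
    | ⟨0, _⟩, ⟨3, _⟩ => exact absurd h h03
    | ⟨0, _⟩, ⟨4, _⟩ => exact absurd h h04
    | ⟨1, _⟩, ⟨0, _⟩ => exact absurd h.symm h01
    | ⟨1, _⟩, ⟨1, _⟩ => rfl
    | ⟨1, _⟩, ⟨2, _⟩ => exact absurd h h12
    | ⟨1, _⟩, ⟨3, _⟩ => exact absurd h h13
    | ⟨1, _⟩, ⟨4, _⟩ => exact absurd h h14
    | ⟨2, _⟩, ⟨0, _⟩ => exact absurd h.symm h02
    | ⟨2, _⟩, ⟨1, _⟩ => exact absurd h.symm h12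
    | ⟨2, _⟩, ⟨2, _⟩ => rfl
    | ⟨2, _⟩, ⟨3, _⟩ => exact absurd h h23
    | ⟨2, _⟩, ⟨4, _⟩ => exact absurd h h24
    | ⟨3, _⟩, ⟨0, _⟩ => exact absurd h.symm h03
    | ⟨3, _⟩, ⟨1, _⟩ => exact absurd h.symm h13
    | ⟨3, _⟩, ⟨2, _⟩ => exact absurd h.symm h23
    | ⟨3, _⟩, ⟨3, _⟩ => rfl
    | ⟨3, _⟩, ⟨4, _⟩ => exact absurd h h34
    | ⟨4, _⟩, ⟨0, _⟩ => exact absurd h.symm h04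
    | ⟨4, _⟩, ⟨1, _⟩ => exact absurd h.symm h14
    | ⟨4, _⟩, ⟨2, _⟩ => exact absurd h.symm h24
    | ⟨4, _⟩, ⟨3, _⟩ => exact absurd h.symm h34
    | ⟨4, _⟩, ⟨4, _⟩ => rfl
  have hbij := Finite.injective_iff_bijective.mp hinj
  refine ⟨Equiv.ofBijective _ hbij, ⟨rfl, rfl, rfl, rfl, rfl⟩, ?_, ?_, ?_, ?_, ?_⟩ <;>
    (rw [Equiv.symm_apply_eq]; rfl)

/-! ### The master reduction -/

theorem masterCore (v₀ x₀ y₀ n1 n2 n3 : PetersenVert)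
    (hx₀ : x₀ ≠ v₀) (hy₀ : y₀ ≠ v₀) (hn1v : n1 ≠ v₀) (hn2v : n2 ≠ v₀) (hn3v : n3 ≠ v₀)
    (hn12 : n1 ≠ n2) (hn13 : n1 ≠ n3) (hn23 : n2 ≠ n3)
    (hkey : ∀ c : Sym2 ({z : PetersenVert // z ≠ v₀} ⊕ Fin 5) → K4,
      IsProperK4EdgeColoring (poleT v₀ x₀ y₀ n1 n2 n3) c →
      goalProp (c s(Sum.inl ⟨x₀, hx₀⟩, Sum.inr 0)) (c s(Sum.inl ⟨y₀, hy₀⟩, Sum.inr 1))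
        (c s(Sum.inl ⟨n1, hn1v⟩, Sum.inr 2)) (c s(Sum.inl ⟨n2, hn2v⟩, Sum.inr 3))
        (c s(Sum.inl ⟨n3, hn3v⟩, Sum.inr 4)))
    (hex : ThreeEdgeColorable (poleT v₀ x₀ y₀ n1 n2 n3))
    (hnbr : ∀ u, petersen.Adj v₀ u → u = n1 ∨ u = n2 ∨ u = n3)
    (v x y w1 w2 w3 : PetersenVert)
    (hw1 : petersen.Adj v w1) (hw2 : petersen.Adj v w2) (hw3 : petersen.Adj v w3)
    (hw12 : w1 ≠ w2) (hw13 : w1 ≠ w3) (hw23 : w2 ≠ w3)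
    (hxv : x ≠ v) (hyv : y ≠ v)
    (h1 : w1 ≠ v) (h2 : w2 ≠ v) (h3 : w3 ≠ v)
    (σ : Equiv.Perm (Fin 5)) (hv : pmf σ v = v₀)
    (hE : s(pmf σ x, pmf σ y) = s(x₀, y₀)) :
    Goal v x y w1 w2 w3 hxv hyv h1 h2 h3 := by
  have ha1 : pmf σ w1 = n1 ∨ pmf σ w1 = n2 ∨ pmf σ w1 = n3 :=
    hnbr _ (by rw [← hv]; exact (pmf_adj σ v w1).mpr hw1)
  have ha2 : pmf σ w2 = n1 ∨ pmf σ w2 = n2 ∨ pmf σ w2 = n3 :=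
    hnbr _ (by rw [← hv]; exact (pmf_adj σ v w2).mpr hw2)
  have ha3 : pmf σ w3 = n1 ∨ pmf σ w3 = n2 ∨ pmf σ w3 = n3 :=
    hnbr _ (by rw [← hv]; exact (pmf_adj σ v w3).mpr hw3)
  have hi12 : pmf σ w1 ≠ pmf σ w2 := fun h => hw12 (pmf_inj σ h)
  have hi13 : pmf σ w1 ≠ pmf σ w3 := fun h => hw13 (pmf_inj σ h)
  have hi23 : pmf σ w2 ≠ pmf σ w3 := fun h => hw23 (pmf_inj σ h)
  rcases Sym2.eq_iff.mp hE with ⟨hpx, hpy⟩ | ⟨hpx, hpy⟩ <;>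
    rcases ha1 with e1 | e1 | e1 <;> rcases ha2 with e2 | e2 | e2 <;> rcases ha3 with e3 | e3 | e3
  · exact absurd (e1.trans e2.symm) hi12
  · exact absurd (e1.trans e2.symm) hi12
  · exact absurd (e1.trans e2.symm) hi12
  · exact absurd (e1.trans e3.symm) hi13
  · exact absurd (e2.trans e3.symm) hi23
  · obtain ⟨τ, ⟨t0, t1, t2, t3, t4⟩, -⟩ := mkperm5 0 1 2 3 4 (by decide) (by decide)
      (by decide) (by decide) (by decide) (by decide) (by decide) (by decide) (by decide) (by decide)
    refine masterTau v₀ x₀ y₀ n1 n2 n3 hx₀ hy₀ hn1v hn2v hn3v hkey hex v x y w1 w2 w3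
      hxv hyv h1 h2 h3 σ τ hv (forall_fin5 ?_ ?_ ?_ ?_ ?_) (Or.inl ⟨t0, t1⟩)
    · rw [t0]; exact hpx.symm
    · rw [t1]; exact hpy.symm
    · rw [t2]; exact e1.symm
    · rw [t3]; exact e2.symm
    · rw [t4]; exact e3.symm
  · exact absurd (e1.trans e3.symm) hi13
  · obtain ⟨τ, ⟨t0, t1, t2, t3, t4⟩, -⟩ := mkperm5 0 1 2 4 3 (by decide) (by decide)
      (by decide) (by decide) (by decide) (by decide) (by decide) (by decide) (by decide) (by decide)
    refine masterTau v₀ x₀ y₀ n1 n2 n3 hx₀ hy₀ hn1v hn2v hn3v hkey hex v x y w1 w2 w3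
      hxv hyv h1 h2 h3 σ τ hv (forall_fin5 ?_ ?_ ?_ ?_ ?_) (Or.inl ⟨t0, t1⟩)
    · rw [t0]; exact hpx.symm
    · rw [t1]; exact hpy.symm
    · rw [t2]; exact e1.symm
    · rw [t3]; exact e2.symm
    · rw [t4]; exact e3.symm
  · exact absurd (e2.trans e3.symm) hi23
  · exact absurd (e2.trans e3.symm) hi23
  · exact absurd (e1.trans e3.symm) hi13
  · obtain ⟨τ, ⟨t0, t1, t2, t3, t4⟩, -⟩ := mkperm5 0 1 3 2 4 (by decide) (by decide)
      (by decide) (by decide) (by decide) (by decide) (by decide) (by decide) (by decide) (by decide)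
    refine masterTau v₀ x₀ y₀ n1 n2 n3 hx₀ hy₀ hn1v hn2v hn3v hkey hex v x y w1 w2 w3
      hxv hyv h1 h2 h3 σ τ hv (forall_fin5 ?_ ?_ ?_ ?_ ?_) (Or.inl ⟨t0, t1⟩)
    · rw [t0]; exact hpx.symm
    · rw [t1]; exact hpy.symm
    · rw [t2]; exact e1.symm
    · rw [t3]; exact e2.symm
    · rw [t4]; exact e3.symm
  · exact absurd (e1.trans e2.symm) hi12
  · exact absurd (e1.trans e2.symm) hi12
  · exact absurd (e1.trans e2.symm) hi12
  · obtain ⟨τ, ⟨t0, t1, t2, t3, t4⟩, -⟩ := mkperm5 0 1 3 4 2 (by decide) (by decide)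
      (by decide) (by decide) (by decide) (by decide) (by decide) (by decide) (by decide) (by decide)
    refine masterTau v₀ x₀ y₀ n1 n2 n3 hx₀ hy₀ hn1v hn2v hn3v hkey hex v x y w1 w2 w3
      hxv hyv h1 h2 h3 σ τ hv (forall_fin5 ?_ ?_ ?_ ?_ ?_) (Or.inl ⟨t0, t1⟩)
    · rw [t0]; exact hpx.symm
    · rw [t1]; exact hpy.symm
    · rw [t2]; exact e1.symm
    · rw [t3]; exact e2.symm
    · rw [t4]; exact e3.symm
  · exact absurd (e1.trans e3.symm) hi13
  · exact absurd (e2.trans e3.symm) hi23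
  · exact absurd (e2.trans e3.symm) hi23
  · obtain ⟨τ, ⟨t0, t1, t2, t3, t4⟩, -⟩ := mkperm5 0 1 4 2 3 (by decide) (by decide)
      (by decide) (by decide) (by decide) (by decide) (by decide) (by decide) (by decide) (by decide)
    refine masterTau v₀ x₀ y₀ n1 n2 n3 hx₀ hy₀ hn1v hn2v hn3v hkey hex v x y w1 w2 w3
      hxv hyv h1 h2 h3 σ τ hv (forall_fin5 ?_ ?_ ?_ ?_ ?_) (Or.inl ⟨t0, t1⟩)
    · rw [t0]; exact hpx.symm
    · rw [t1]; exact hpy.symm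
    · rw [t2]; exact e1.symm
    · rw [t3]; exact e2.symm
    · rw [t4]; exact e3.symm
  · exact absurd (e1.trans e3.symm) hi13
  · obtain ⟨τ, ⟨t0, t1, t2, t3, t4⟩, -⟩ := mkperm5 0 1 4 3 2 (by decide) (by decide)
      (by decide) (by decide) (by decide) (by decide) (by decide) (by decide) (by decide) (by decide)
    refine masterTau v₀ x₀ y₀ n1 n2 n3 hx₀ hy₀ hn1v hn2v hn3v hkey hex v x y w1 w2 w3
      hxv hyv h1 h2 h3 σ τ hv (forall_fin5 ?_ ?_ ?_ ?_ ?_) (Or.inl ⟨t0, t1⟩)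
    · rw [t0]; exact hpx.symm
    · rw [t1]; exact hpy.symm
    · rw [t2]; exact e1.symm
    · rw [t3]; exact e2.symm
    · rw [t4]; exact e3.symm
  · exact absurd (e2.trans e3.symm) hi23
  · exact absurd (e1.trans e3.symm) hi13
  · exact absurd (e1.trans e2.symm) hi12
  · exact absurd (e1.trans e2.symm) hi12
  · exact absurd (e1.trans e2.symm) hi12
  · exact absurd (e1.trans e2.symm) hi12
  · exact absurd (e1.trans e2.symm) hi12
  · exact absurd (e1.trans e2.symm) hi12
  · exact absurd (e1.trans e3.symm) hi13
  · exact absurd (e2.trans e3.symm) hi23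
  · obtain ⟨τ, ⟨t0, t1, t2, t3, t4⟩, -⟩ := mkperm5 1 0 2 3 4 (by decide) (by decide)
      (by decide) (by decide) (by decide) (by decide) (by decide) (by decide) (by decide) (by decide)
    refine masterTau v₀ x₀ y₀ n1 n2 n3 hx₀ hy₀ hn1v hn2v hn3v hkey hex v x y w1 w2 w3
      hxv hyv h1 h2 h3 σ τ hv (forall_fin5 ?_ ?_ ?_ ?_ ?_) (Or.inr ⟨t0, t1⟩)
    · rw [t0]; exact hpx.symm
    · rw [t1]; exact hpy.symm
    · rw [t2]; exact e1.symm
    · rw [t3]; exact e2.symm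
    · rw [t4]; exact e3.symm
  · exact absurd (e1.trans e3.symm) hi13
  · obtain ⟨τ, ⟨t0, t1, t2, t3, t4⟩, -⟩ := mkperm5 1 0 2 4 3 (by decide) (by decide)
      (by decide) (by decide) (by decide) (by decide) (by decide) (by decide) (by decide) (by decide)
    refine masterTau v₀ x₀ y₀ n1 n2 n3 hx₀ hy₀ hn1v hn2v hn3v hkey hex v x y w1 w2 w3
      hxv hyv h1 h2 h3 σ τ hv (forall_fin5 ?_ ?_ ?_ ?_ ?_) (Or.inr ⟨t0, t1⟩)
    · rw [t0]; exact hpx.symm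
    · rw [t1]; exact hpy.symm
    · rw [t2]; exact e1.symm
    · rw [t3]; exact e2.symm
    · rw [t4]; exact e3.symm
  · exact absurd (e2.trans e3.symm) hi23
  · exact absurd (e2.trans e3.symm) hi23
  · exact absurd (e1.trans e3.symm) hi13
  · obtain ⟨τ, ⟨t0, t1, t2, t3, t4⟩, -⟩ := mkperm5 1 0 3 2 4 (by decide) (by decide)
      (by decide) (by decide) (by decide) (by decide) (by decide) (by decide) (by decide) (by decide)
    refine masterTau v₀ x₀ y₀ n1 n2 n3 hx₀ hy₀ hn1v hn2v hn3v hkey hex v x y w1 w2 w3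
      hxv hyv h1 h2 h3 σ τ hv (forall_fin5 ?_ ?_ ?_ ?_ ?_) (Or.inr ⟨t0, t1⟩)
    · rw [t0]; exact hpx.symm
    · rw [t1]; exact hpy.symm
    · rw [t2]; exact e1.symm
    · rw [t3]; exact e2.symm
    · rw [t4]; exact e3.symm
  · exact absurd (e1.trans e2.symm) hi12
  · exact absurd (e1.trans e2.symm) hi12
  · exact absurd (e1.trans e2.symm) hi12
  · obtain ⟨τ, ⟨t0, t1, t2, t3, t4⟩, -⟩ := mkperm5 1 0 3 4 2 (by decide) (by decide)
      (by decide) (by decide) (by decide) (by decide) (by decide) (by decide) (by decide) (by decide)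
    refine masterTau v₀ x₀ y₀ n1 n2 n3 hx₀ hy₀ hn1v hn2v hn3v hkey hex v x y w1 w2 w3
      hxv hyv h1 h2 h3 σ τ hv (forall_fin5 ?_ ?_ ?_ ?_ ?_) (Or.inr ⟨t0, t1⟩)
    · rw [t0]; exact hpx.symm
    · rw [t1]; exact hpy.symm
    · rw [t2]; exact e1.symm
    · rw [t3]; exact e2.symm
    · rw [t4]; exact e3.symm
  · exact absurd (e1.trans e3.symm) hi13
  · exact absurd (e2.trans e3.symm) hi23
  · exact absurd (e2.trans e3.symm) hi23
  · obtain ⟨τ, ⟨t0, t1, t2, t3, t4⟩, -⟩ := mkperm5 1 0 4 2 3 (by decide) (by decide)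
      (by decide) (by decide) (by decide) (by decide) (by decide) (by decide) (by decide) (by decide)
    refine masterTau v₀ x₀ y₀ n1 n2 n3 hx₀ hy₀ hn1v hn2v hn3v hkey hex v x y w1 w2 w3
      hxv hyv h1 h2 h3 σ τ hv (forall_fin5 ?_ ?_ ?_ ?_ ?_) (Or.inr ⟨t0, t1⟩)
    · rw [t0]; exact hpx.symm
    · rw [t1]; exact hpy.symm
    · rw [t2]; exact e1.symm
    · rw [t3]; exact e2.symm
    · rw [t4]; exact e3.symm
  · exact absurd (e1.trans e3.symm) hi13
  · obtain ⟨τ, ⟨t0, t1, t2, t3, t4⟩, -⟩ := mkperm5 1 0 4 3 2 (by decide) (by decide)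
      (by decide) (by decide) (by decide) (by decide) (by decide) (by decide) (by decide) (by decide)
    refine masterTau v₀ x₀ y₀ n1 n2 n3 hx₀ hy₀ hn1v hn2v hn3v hkey hex v x y w1 w2 w3
      hxv hyv h1 h2 h3 σ τ hv (forall_fin5 ?_ ?_ ?_ ?_ ?_) (Or.inr ⟨t0, t1⟩)
    · rw [t0]; exact hpx.symm
    · rw [t1]; exact hpy.symm
    · rw [t2]; exact e1.symm
    · rw [t3]; exact e2.symm
    · rw [t4]; exact e3.symm
  · exact absurd (e2.trans e3.symm) hi23
  · exact absurd (e1.trans e3.symm) hi13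
  · exact absurd (e1.trans e2.symm) hi12
  · exact absurd (e1.trans e2.symm) hi12
  · exact absurd (e1.trans e2.symm) hi12

/-! ### The three classification cases -/

theorem caseI (v x y w1 w2 w3 : PetersenVert)
    (hw1 : petersen.Adj v w1) (hw2 : petersen.Adj v w2) (hw3 : petersen.Adj v w3)
    (hw12 : w1 ≠ w2) (hw13 : w1 ≠ w3) (hw23 : w2 ≠ w3)
    (hxv : x ≠ v) (hyv : y ≠ v)
    (A B C D E : Fin 5)
    (hAB : A ≠ B) (hAC : A ≠ C) (hAD : A ≠ D) (hAE : A ≠ E)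
    (hBC : B ≠ C) (hBD : B ≠ D) (hBE : B ≠ E) (hCD : C ≠ D) (hCE : C ≠ E) (hDE : D ≠ E)
    (hx : x.1 = {A, B}) (hy : y.1 = {C, D}) (hv : v.1 = {C, E}) :
    Goal v x y w1 w2 w3 hxv hyv hw1.ne' hw2.ne' hw3.ne' := by
  obtain ⟨τ, -, sA, sB, sC, sD, sE⟩ :=
    mkperm5 A B C D E hAB hAC hAD hAE hBC hBD hBE hCD hCE hDE
  have hvim : pmf τ.symm v = v0I := Subtype.ext (by rw [pmf_pair τ.symm v C E hv, sC, sE]; rfl)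
  have hxim : pmf τ.symm x = x0I := Subtype.ext (by rw [pmf_pair τ.symm x A B hx, sA, sB]; rfl)
  have hyim : pmf τ.symm y = y0I := Subtype.ext (by rw [pmf_pair τ.symm y C D hy, sC, sD]; rfl)
  exact masterCore v0I x0I y0I n1I n2I n3I (by decide) (by decide) (by decide) (by decide)
    (by decide) (by decide) (by decide) (by decide) keyI existI nbrI v x y w1 w2 w3
    hw1 hw2 hw3 hw12 hw13 hw23 hxv hyv hw1.ne' hw2.ne' hw3.ne' τ.symm hvim
    (by rw [hxim, hyim])

theorem caseIswap (v x y w1 w2 w3 : PetersenVert)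
    (hw1 : petersen.Adj v w1) (hw2 : petersen.Adj v w2) (hw3 : petersen.Adj v w3)
    (hw12 : w1 ≠ w2) (hw13 : w1 ≠ w3) (hw23 : w2 ≠ w3)
    (hxv : x ≠ v) (hyv : y ≠ v)
    (A B C D E : Fin 5)
    (hAB : A ≠ B) (hAC : A ≠ C) (hAD : A ≠ D) (hAE : A ≠ E)
    (hBC : B ≠ C) (hBD : B ≠ D) (hBE : B ≠ E) (hCD : C ≠ D) (hCE : C ≠ E) (hDE : D ≠ E)
    (hx : x.1 = {A, B}) (hy : y.1 = {C, D}) (hv : v.1 = {A, E}) :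
    Goal v x y w1 w2 w3 hxv hyv hw1.ne' hw2.ne' hw3.ne' := by
  obtain ⟨τ, -, sC, sD, sA, sB, sE⟩ :=
    mkperm5 C D A B E hCD hAC.symm hBC.symm hCE hAD.symm hBD.symm hDE hAB hAE hBE
  have hvim : pmf τ.symm v = v0I := Subtype.ext (by rw [pmf_pair τ.symm v A E hv, sA, sE]; rfl)
  have hxim : pmf τ.symm x = y0I := Subtype.ext (by rw [pmf_pair τ.symm x A B hx, sA, sB]; rfl)
  have hyim : pmf τ.symm y = x0I := Subtype.ext (by rw [pmf_pair τ.symm y C D hy, sC, sD]; rfl)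
  exact masterCore v0I x0I y0I n1I n2I n3I (by decide) (by decide) (by decide) (by decide)
    (by decide) (by decide) (by decide) (by decide) keyI existI nbrI v x y w1 w2 w3
    hw1 hw2 hw3 hw12 hw13 hw23 hxv hyv hw1.ne' hw2.ne' hw3.ne' τ.symm hvim
    (by rw [hxim, hyim]; exact Sym2.eq_swap)

theorem caseII (v x y w1 w2 w3 : PetersenVert)
    (hw1 : petersen.Adj v w1) (hw2 : petersen.Adj v w2) (hw3 : petersen.Adj v w3)
    (hw12 : w1 ≠ w2) (hw13 : w1 ≠ w3) (hw23 : w2 ≠ w3)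
    (hxv : x ≠ v) (hyv : y ≠ v)
    (A B C D E : Fin 5)
    (hAB : A ≠ B) (hAC : A ≠ C) (hAD : A ≠ D) (hAE : A ≠ E)
    (hBC : B ≠ C) (hBD : B ≠ D) (hBE : B ≠ E) (hCD : C ≠ D) (hCE : C ≠ E) (hDE : D ≠ E)
    (hx : x.1 = {A, B}) (hy : y.1 = {C, D}) (hv : v.1 = {A, C}) :
    Goal v x y w1 w2 w3 hxv hyv hw1.ne' hw2.ne' hw3.ne' := by
  obtain ⟨τ, -, sA, sB, sC, sD, sE⟩ :=
    mkperm5 A B C D E hAB hAC hAD hAE hBC hBD hBE hCD hCE hDE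
  have hvim : pmf τ.symm v = v0II := Subtype.ext (by rw [pmf_pair τ.symm v A C hv, sA, sC]; rfl)
  have hxim : pmf τ.symm x = x0II := Subtype.ext (by rw [pmf_pair τ.symm x A B hx, sA, sB]; rfl)
  have hyim : pmf τ.symm y = y0II := Subtype.ext (by rw [pmf_pair τ.symm y C D hy, sC, sD]; rfl)
  exact masterCore v0II x0II y0II n1II n2II n3II (by decide) (by decide) (by decide) (by decide)
    (by decide) (by decide) (by decide) (by decide) keyII existII nbrII v x y w1 w2 w3
    hw1 hw2 hw3 hw12 hw13 hw23 hxv hyv hw1.ne' hw2.ne' hw3.ne' τ.symm hvim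
    (by rw [hxim, hyim])

/-! ### The main theorem -/

/-- The pole `T` is colourable, and in every proper 3-edge-colouring with colours the
nonzero elements of `Z2 × Z2` the two dangling edges at `x` and `y` get distinct
colours, while the three dangling edges at `w1, w2, w3` get the colours
`c(x) + c(y), z, z` (in some order) for some colour `z`. -/
theorem poleT_coloring (v x y w1 w2 w3 : PetersenVert)
    (hw1 : petersen.Adj v w1) (hw2 : petersen.Adj v w2) (hw3 : petersen.Adj v w3)
    (hw12 : w1 ≠ w2) (hw13 : w1 ≠ w3) (hw23 : w2 ≠ w3)
    (hxy : petersen.Adj x y) (hxv : x ≠ v) (hyv : y ≠ v) :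
    ThreeEdgeColorable (poleT v x y w1 w2 w3) ∧
    ∀ c : Sym2 ({z : PetersenVert // z ≠ v} ⊕ Fin 5) → ZMod 2 × ZMod 2,
      IsProperK4EdgeColoring (poleT v x y w1 w2 w3) c →
      c s(Sum.inl ⟨x, hxv⟩, Sum.inr 0) ≠ c s(Sum.inl ⟨y, hyv⟩, Sum.inr 1) ∧
      ∃ z : ZMod 2 × ZMod 2, z ≠ 0 ∧
        ({c s(Sum.inl ⟨w1, hw1.ne'⟩, Sum.inr 2),
          c s(Sum.inl ⟨w2, hw2.ne'⟩, Sum.inr 3),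
          c s(Sum.inl ⟨w3, hw3.ne'⟩, Sum.inr 4)} : Multiset (ZMod 2 × ZMod 2)) =
        {c s(Sum.inl ⟨x, hxv⟩, Sum.inr 0) + c s(Sum.inl ⟨y, hyv⟩, Sum.inr 1), z, z} := by
  have key : Goal v x y w1 w2 w3 hxv hyv hw1.ne' hw2.ne' hw3.ne' := by
    have hdisj : Disjoint x.1 y.1 := hxy
    obtain ⟨A, B, hAB, hxAB⟩ := Finset.card_eq_two.mp x.2
    obtain ⟨C, D, hCD, hyCD⟩ := Finset.card_eq_two.mp y.2
    have hAx : A ∈ x.1 := by rw [hxAB]; exact Finset.mem_insert_self _ _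
    have hBx : B ∈ x.1 := by rw [hxAB]; exact Finset.mem_insert_of_mem (Finset.mem_singleton_self _)
    have hCy : C ∈ y.1 := by rw [hyCD]; exact Finset.mem_insert_self _ _
    have hDy : D ∈ y.1 := by rw [hyCD]; exact Finset.mem_insert_of_mem (Finset.mem_singleton_self _)
    have hcard : ((x.1 ∪ y.1)ᶜ : Finset (Fin 5)).card = 1 := by
      rw [Finset.card_compl, Finset.card_union_of_disjoint hdisj, x.2, y.2]
      rfl
    obtain ⟨E, hE5⟩ := Finset.card_eq_one.mp hcard
    have hEu : E ∉ x.1 ∪ y.1 := by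
      have hh : E ∈ (x.1 ∪ y.1)ᶜ := by rw [hE5]; exact Finset.mem_singleton_self E
      exact Finset.mem_compl.mp hh
    have hEx : E ∉ x.1 := fun h => hEu (Finset.mem_union_left _ h)
    have hEy : E ∉ y.1 := fun h => hEu (Finset.mem_union_right _ h)
    have memu : ∀ i : Fin 5, i ≠ E → i ∈ x.1 ∪ y.1 := by
      intro i hi
      by_contra hcon
      have hh : i ∈ (x.1 ∪ y.1)ᶜ := Finset.mem_compl.mpr hcon
      rw [hE5] at hh
      exact hi (Finset.mem_singleton.mp hh)
    have hdj := Finset.disjoint_left.mp hdisj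
    have hAC : A ≠ C := fun h => (hdj hAx) (h ▸ hCy)
    have hAD : A ≠ D := fun h => (hdj hAx) (h ▸ hDy)
    have hBC : B ≠ C := fun h => (hdj hBx) (h ▸ hCy)
    have hBD : B ≠ D := fun h => (hdj hBx) (h ▸ hDy)
    have hAE : A ≠ E := fun h => hEx (h ▸ hAx)
    have hBE : B ≠ E := fun h => hEx (h ▸ hBx)
    have hCE : C ≠ E := fun h => hEy (h ▸ hCy)
    have hDE : D ≠ E := fun h => hEy (h ▸ hDy)
    obtain ⟨P, Q, hPQ, hvPQ⟩ := Finset.card_eq_two.mp v.2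
    have hPv : P ∈ v.1 := by rw [hvPQ]; exact Finset.mem_insert_self _ _
    have hQv : Q ∈ v.1 := by rw [hvPQ]; exact Finset.mem_insert_of_mem (Finset.mem_singleton_self _)
    by_cases hEv : E ∈ v.1
    · -- v contains the fifth point: class I (up to swapping x and y)
      obtain ⟨t, hvt, htE⟩ : ∃ t, v.1 = {t, E} ∧ t ≠ E := by
        rw [hvPQ] at hEv
        rcases Finset.mem_insert.mp hEv with h | h
        · exact ⟨Q, by rw [hvPQ, ← h, Finset.pair_comm], fun hq => hPQ (h.symm.trans hq.symm)⟩
        · have hq := Finset.mem_singleton.mp h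
          exact ⟨P, by rw [hvPQ, ← hq], fun hp => hPQ (hp.trans hq)⟩
      rcases Finset.mem_union.mp (memu t htE) with htx | hty
      · rw [hxAB] at htx
        rcases Finset.mem_insert.mp htx with h | htx'
        · rw [h] at hvt
          exact caseIswap v x y w1 w2 w3 hw1 hw2 hw3 hw12 hw13 hw23 hxv hyv A B C D E
            hAB hAC hAD hAE hBC hBD hBE hCD hCE hDE hxAB hyCD hvt
        · rw [Finset.mem_singleton.mp htx'] at hvt
          exact caseIswap v x y w1 w2 w3 hw1 hw2 hw3 hw12 hw13 hw23 hxv hyv B A C D E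
            hAB.symm hBC hBD hBE hAC hAD hAE hCD hCE hDE
            (by rw [hxAB, Finset.pair_comm]) hyCD hvt
      · rw [hyCD] at hty
        rcases Finset.mem_insert.mp hty with h | hty'
        · rw [h] at hvt
          exact caseI v x y w1 w2 w3 hw1 hw2 hw3 hw12 hw13 hw23 hxv hyv A B C D E
            hAB hAC hAD hAE hBC hBD hBE hCD hCE hDE hxAB hyCD hvt
        · rw [Finset.mem_singleton.mp hty'] at hvt
          exact caseI v x y w1 w2 w3 hw1 hw2 hw3 hw12 hw13 hw23 hxv hyv A B D C E
            hAB hAD hAC hAE hBD hBC hBE hCD.symm hDE hCE hxAB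
            (by rw [hyCD, Finset.pair_comm]) hvt
    · -- v avoids the fifth point: class II (or degenerate)
      have hPE : P ≠ E := fun h => hEv (h ▸ hPv)
      have hQE : Q ≠ E := fun h => hEv (h ▸ hQv)
      have hxv1 : x.1 ≠ v.1 := fun h => hxv (Subtype.ext h)
      have hyv1 : y.1 ≠ v.1 := fun h => hyv (Subtype.ext h)
      rcases Finset.mem_union.mp (memu P hPE) with hPx | hPy <;>
        rcases Finset.mem_union.mp (memu Q hQE) with hQx | hQy
      · -- both in x : contradiction
        exfalso
        rw [hxAB] at hPx hQx
        apply hxv1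
        rw [hxAB, hvPQ]
        rcases Finset.mem_insert.mp hPx with hP | hP <;>
          rcases Finset.mem_insert.mp hQx with hQ | hQ
        · exact absurd (hP.trans hQ.symm) hPQ
        · rw [hP, Finset.mem_singleton.mp hQ]
        · rw [Finset.mem_singleton.mp hP, hQ, Finset.pair_comm]
        · exact absurd ((Finset.mem_singleton.mp hP).trans (Finset.mem_singleton.mp hQ).symm) hPQ
      · -- P ∈ x, Q ∈ y : class II
        rw [hxAB] at hPx
        rw [hyCD] at hQy
        rcases Finset.mem_insert.mp hPx with hP | hP <;>
          rcases Finset.mem_insert.mp hQy with hQ | hQ <;>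
          [skip; rw [Finset.mem_singleton.mp hQ] at hvPQ;
           rw [Finset.mem_singleton.mp hP] at hvPQ;
           rw [Finset.mem_singleton.mp hP, Finset.mem_singleton.mp hQ] at hvPQ] <;>
          [rw [hP, hQ] at hvPQ; rw [hP] at hvPQ; rw [hQ] at hvPQ; skip]
        · exact caseII v x y w1 w2 w3 hw1 hw2 hw3 hw12 hw13 hw23 hxv hyv A B C D E
            hAB hAC hAD hAE hBC hBD hBE hCD hCE hDE hxAB hyCD hvPQ
        · exact caseII v x y w1 w2 w3 hw1 hw2 hw3 hw12 hw13 hw23 hxv hyv A B D C E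
            hAB hAD hAC hAE hBD hBC hBE hCD.symm hDE hCE hxAB
            (by rw [hyCD, Finset.pair_comm]) hvPQ
        · exact caseII v x y w1 w2 w3 hw1 hw2 hw3 hw12 hw13 hw23 hxv hyv B A C D E
            hAB.symm hBC hBD hBE hAC hAD hAE hCD hCE hDE
            (by rw [hxAB, Finset.pair_comm]) hyCD hvPQ
        · exact caseII v x y w1 w2 w3 hw1 hw2 hw3 hw12 hw13 hw23 hxv hyv B A D C E
            hAB.symm hBD hBC hBE hAD hAC hAE hCD.symm hDE hCE
            (by rw [hxAB, Finset.pair_comm]) (by rw [hyCD, Finset.pair_comm]) hvPQ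
      · -- P ∈ y, Q ∈ x : class II with the pair reversed
        rw [hyCD] at hPy
        rw [hxAB] at hQx
        have hvQP : v.1 = {Q, P} := by rw [hvPQ, Finset.pair_comm]
        rcases Finset.mem_insert.mp hQx with hQ | hQ <;>
          rcases Finset.mem_insert.mp hPy with hP | hP <;>
          [skip; rw [Finset.mem_singleton.mp hP] at hvQP;
           rw [Finset.mem_singleton.mp hQ] at hvQP;
           rw [Finset.mem_singleton.mp hQ, Finset.mem_singleton.mp hP] at hvQP] <;>
          [rw [hQ, hP] at hvQP; rw [hQ] at hvQP; rw [hP] at hvQP; skip]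
        · exact caseII v x y w1 w2 w3 hw1 hw2 hw3 hw12 hw13 hw23 hxv hyv A B C D E
            hAB hAC hAD hAE hBC hBD hBE hCD hCE hDE hxAB hyCD hvQP
        · exact caseII v x y w1 w2 w3 hw1 hw2 hw3 hw12 hw13 hw23 hxv hyv A B D C E
            hAB hAD hAC hAE hBD hBC hBE hCD.symm hDE hCE hxAB
            (by rw [hyCD, Finset.pair_comm]) hvQP
        · exact caseII v x y w1 w2 w3 hw1 hw2 hw3 hw12 hw13 hw23 hxv hyv B A C D E
            hAB.symm hBC hBD hBE hAC hAD hAE hCD hCE hDE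
            (by rw [hxAB, Finset.pair_comm]) hyCD hvQP
        · exact caseII v x y w1 w2 w3 hw1 hw2 hw3 hw12 hw13 hw23 hxv hyv B A D C E
            hAB.symm hBD hBC hBE hAD hAC hAE hCD.symm hDE hCE
            (by rw [hxAB, Finset.pair_comm]) (by rw [hyCD, Finset.pair_comm]) hvQP
      · -- both in y : contradiction
        exfalso
        rw [hyCD] at hPy hQy
        apply hyv1
        rw [hyCD, hvPQ]
        rcases Finset.mem_insert.mp hPy with hP | hP <;>
          rcases Finset.mem_insert.mp hQy with hQ | hQ
        · exact absurd (hP.trans hQ.symm) hPQ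
        · rw [hP, Finset.mem_singleton.mp hQ]
        · rw [Finset.mem_singleton.mp hP, hQ, Finset.pair_comm]
        · exact absurd ((Finset.mem_singleton.mp hP).trans (Finset.mem_singleton.mp hQ).symm) hPQ
  obtain ⟨k1, k2⟩ := key
  refine ⟨k1, fun c hc => ?_⟩
  obtain ⟨hne, z, hz, hm⟩ := k2 c hc
  exact ⟨hne, z, hz, hm⟩
end

section
/- Let G be a cubic graph on n vertices containing a cycle of length c. If c is even then ρ(G) ≤ n − c, and if c is odd then ρ(G) ≤ n − c + 1. In particular, if the circumference deficit ξ(G) = n − c(G) (where c(G) is the circumference of G) is even then ξ(G) ≥ ρ(G), and in general ξ(G) ≥ ρ(G) − 1. -/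
/-- A cubic graph: every vertex has exactly 3 neighbours. -/
def IsCubic {V : Type*} (G : SimpleGraph V) : Prop :=
  ∀ v : V, Nat.card (G.neighborSet v) = 3

/-- A 2-connected graph: connected and with no cutvertex. -/
def TwoConnected {V : Type*} (G : SimpleGraph V) : Prop :=
  G.Connected ∧ ∀ v : V, (G.induce ({v}ᶜ : Set V)).Connected

/-- A snark: a 2-connected cubic graph admitting no proper 3-edge-colouring. -/
def IsSnark {V : Type*} (G : SimpleGraph V) : Prop :=
  IsCubic G ∧ TwoConnected G ∧ ¬ ThreeEdgeColorable G

/-- A 2-factor of `G`: a spanning subgraph in which every vertex has degree 2. -/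
def IsTwoFactor {V : Type*} (G H : SimpleGraph V) : Prop :=
  H ≤ G ∧ ∀ v : V, Nat.card (H.neighborSet v) = 2

/-- An even factor of `G`: a spanning subgraph in which every vertex has even degree. -/
def IsEvenFactor {V : Type*} (G H : SimpleGraph V) : Prop :=
  H ≤ G ∧ ∀ v : V, Even (Nat.card (H.neighborSet v))

/-- The number of connected components of odd order of a graph. -/
noncomputable def oddComponentCount {V : Type*} (H : SimpleGraph V) : ℕ :=
  Nat.card {C : H.ConnectedComponent // Odd (Nat.card C.supp)}

/-- The oddness of a graph: the smallest number of odd components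
(odd circuits) in a 2-factor. -/
noncomputable def oddness {V : Type*} (G : SimpleGraph V) : ℕ :=
  sInf {n | ∃ H : SimpleGraph V, IsTwoFactor G H ∧ oddComponentCount H = n}

/-- The weak oddness of a graph: the smallest number of odd components in an even factor. -/
noncomputable def weakOddness {V : Type*} (G : SimpleGraph V) : ℕ :=
  sInf {n | ∃ H : SimpleGraph V, IsEvenFactor G H ∧ oddComponentCount H = n}

/-- The resistance of a graph: the smallest number of vertices whose removal
yields a graph admitting a proper 3-edge-colouring. -/
noncomputable def resistance {V : Type*} (G : SimpleGraph V) : ℕ :=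
  sInf {n | ∃ S : Set V, S.ncard = n ∧ ThreeEdgeColorable (G.induce Sᶜ)}

/-- There is a cycle through the vertex `v`. -/
def HasCycleAt {V : Type*} (G : SimpleGraph V) (v : V) : Prop :=
  ∃ p : G.Walk v v, p.IsCycle

/-- A set of edges is cycle-separating if after deleting it at least two components
contain cycles. -/
def CycleSeparating {V : Type*} (G : SimpleGraph V) (s : Set (Sym2 V)) : Prop :=
  s ⊆ G.edgeSet ∧ ∃ u v : V, HasCycleAt (G.deleteEdges s) u ∧ HasCycleAt (G.deleteEdges s) v ∧
    ¬ (G.deleteEdges s).Reachable u v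

/-- `G` is cyclically `k`-edge-connected: no set of fewer than `k` edges is cycle-separating. -/
def CyclicallyEdgeConnected {V : Type*} (G : SimpleGraph V) (k : ℕ) : Prop :=
  ∀ s : Finset (Sym2 V), s.card < k → ¬ CycleSeparating G (↑s : Set (Sym2 V))

/-- The cycle rank `β(G) = |E(G)| - |V(G)| + 1` of a graph. -/
noncomputable def cycleRank {V : Type*} (G : SimpleGraph V) : ℕ :=
  Nat.card G.edgeSet + 1 - Nat.card V

/-- The cyclic connectivity of `G`: the largest `k ≤ β(G)` such that `G` is
cyclically `k`-edge-connected. -/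
noncomputable def cyclicConnectivity {V : Type*} (G : SimpleGraph V) : ℕ :=
  sSup {k | k ≤ cycleRank G ∧ CyclicallyEdgeConnected G k}

/-- The circumference of a graph: the maximum length of a cycle. -/
noncomputable def circumference {V : Type*} (G : SimpleGraph V) : ℕ :=
  sSup {n | ∃ (v : V) (p : G.Walk v v), p.IsCycle ∧ p.length = n}

def nearP (N i j : ℕ) : Prop :=
  i + 1 = j ∨ j + 1 = i ∨ (i = 0 ∧ j + 1 = N) ∨ (j = 0 ∧ i + 1 = N)

def gcol (N i j : ℕ) : ℕ :=
  if i + 1 = j then i % 2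
  else if j + 1 = i then j % 2
  else if (i = 0 ∧ j + 1 = N) ∨ (j = 0 ∧ i + 1 = N) then 1 else 2

lemma gcol_symm (N i j : ℕ) : gcol N i j = gcol N j i := by
  unfold gcol; split_ifs <;> omega

lemma gcol_lt (N i j : ℕ) : gcol N i j < 3 := by
  unfold gcol; split_ifs <;> omega

set_option maxHeartbeats 1000000 in
lemma gcol_ne (N i j k : ℕ) (hN : N % 2 = 0) (hi : i < N) (hj : j < N) (hk : k < N)
    (hij : i ≠ j) (hik : i ≠ k) (hjk : j ≠ k)
    (h : nearP N i j ∨ nearP N i k) : gcol N i j ≠ gcol N i k := by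
  simp only [nearP] at h; unfold gcol; split_ifs <;> omega

lemma three_colorable_aux {W : Type*} (H : SimpleGraph W) (N : ℕ) (hN : N % 2 = 0)
    (idx : W → ℕ) (hlt : ∀ w, idx w < N) (hinj : Function.Injective idx)
    (h4 : ∀ v w₁ w₂ : W, H.Adj v w₁ → H.Adj v w₂ → ¬ nearP N (idx v) (idx w₁) →
      ¬ nearP N (idx v) (idx w₂) → w₁ = w₂) :
    ThreeEdgeColorable H := by
  have key : ∀ v b y : W, H.Adj v b → H.Adj v y → b ≠ y →
      gcol N (idx v) (idx b) ≠ gcol N (idx v) (idx y) := by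
    intro v b y hb hy hbyv
    have h1 := hlt v; have h2 := hlt b; have h3 := hlt y
    have hib : idx v ≠ idx b := fun h => hb.ne (hinj h)
    have hiy : idx v ≠ idx y := fun h => hy.ne (hinj h)
    have hby : idx b ≠ idx y := fun h => hbyv (hinj h)
    by_cases HB : nearP N (idx v) (idx b)
    · exact gcol_ne N _ _ _ hN h1 h2 h3 hib hiy hby (Or.inl HB)
    by_cases HY : nearP N (idx v) (idx y)
    · exact gcol_ne N _ _ _ hN h1 h2 h3 hib hiy hby (Or.inr HY)
    exact absurd (h4 v b y hb hy HB HY) hbyv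
  refine ⟨Sym2.lift ⟨fun u w => ⟨gcol N (idx u) (idx w), gcol_lt N _ _⟩,
    fun u w => Fin.ext (gcol_symm N _ _)⟩, ?_⟩
  intro e₁ e₂
  induction e₁ using Sym2.ind with
  | _ a b =>
  induction e₂ using Sym2.ind with
  | _ x y =>
  rintro h₁ h₂ hne ⟨u, hu₁, hu₂⟩
  rw [SimpleGraph.mem_edgeSet] at h₁ h₂
  rw [Sym2.mem_iff] at hu₁ hu₂
  simp only [Sym2.lift_mk, ne_eq, Fin.mk.injEq]
  rcases hu₁ with rfl | rfl
  · rcases hu₂ with rfl | rfl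
    · exact key u b y h₁ h₂ (fun hh => hne (by rw [hh]))
    · rw [gcol_symm N (idx x) (idx u)]
      exact key u b x h₁ h₂.symm (fun hh => hne (by rw [hh, Sym2.eq_swap]))
  · rcases hu₂ with rfl | rfl
    · rw [gcol_symm N (idx a) (idx u)]
      exact key u a y h₁.symm h₂ (fun hh => hne (by rw [hh, Sym2.eq_swap]))
    · rw [gcol_symm N (idx a) (idx u), gcol_symm N (idx x) (idx u)]
      exact key u a x h₁.symm h₂.symm (fun hh => hne (by rw [hh]))

lemma cubic_two_other {V : Type*} [Fintype V] {G : SimpleGraph V} (hc : IsCubic G)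
    {v a b w₁ w₂ : V} (ha : G.Adj v a) (hb : G.Adj v b) (hab : a ≠ b)
    (h₁ : G.Adj v w₁) (h₂ : G.Adj v w₂) (h₁a : w₁ ≠ a) (h₁b : w₁ ≠ b)
    (h₂a : w₂ ≠ a) (h₂b : w₂ ≠ b) : w₁ = w₂ := by
  by_contra hne
  classical
  have hsub : ({a, b, w₁, w₂} : Finset V) ⊆ (G.neighborSet v).toFinset := by
    intro x hx
    simp only [Finset.mem_insert, Finset.mem_singleton] at hx
    rw [Set.mem_toFinset]
    rcases hx with h|h|h|h <;> subst h <;> assumption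
  have hcard : ({a, b, w₁, w₂} : Finset V).card = 4 := by
    rw [Finset.card_insert_of_notMem (by simp [hab, h₁a.symm, h₂a.symm]),
      Finset.card_insert_of_notMem (by simp [h₁b.symm, h₂b.symm]),
      Finset.card_insert_of_notMem (by simp [hne]), Finset.card_singleton]
  have h3 : (G.neighborSet v).toFinset.card = 3 := by
    rw [← Set.ncard_eq_toFinset_card', ← Nat.card_coe_set_eq]; exact hc v
  have := Finset.card_le_card hsub
  omega

lemma cubic_even_card {V : Type*} [Fintype V] {G : SimpleGraph V} (h : IsCubic G) :
    Even (Fintype.card V) := by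
  classical
  have hdeg : ∀ v, G.degree v = 3 := fun v => by
    rw [← SimpleGraph.card_neighborSet_eq_degree, ← Nat.card_eq_fintype_card]
    exact h v
  have hev := SimpleGraph.even_card_odd_degree_vertices G
  have huniv : (Finset.univ.filter fun v => Odd (G.degree v)) = Finset.univ :=
    Finset.filter_true_of_mem fun x _ => by rw [hdeg]; exact ⟨1, rfl⟩
  rwa [huniv, Finset.card_univ] at hev

lemma cycle_colorable {V : Type*} [Fintype V] [DecidableEq V] {G : SimpleGraph V}
    (hcubic : IsCubic G) {v : V} (p : G.Walk v v) (hp : p.IsCycle)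
    (heven : Even p.length) :
    ThreeEdgeColorable (G.induce {w | w ∈ p.support.tail}) := by
  set L := p.support.tail with hL
  have hnd : L.Nodup := hp.support_nodup
  have hlen : L.length = p.length := by
    rw [hL, List.length_tail, SimpleGraph.Walk.length_support]; omega
  have h3 : 3 ≤ L.length := hlen ▸ hp.three_le_length
  have hchain : List.Chain' G.Adj (v :: L) := by
    rw [hL, ← SimpleGraph.Walk.support_eq_cons]; exact p.isChain_adj_support
  have hstep : ∀ i, ∀ h : i + 1 < L.length, G.Adj (L[i]'(by omega)) (L[i+1]'h) := by
    intro i h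
    have := List.isChain_iff_getElem.mp hchain (i+1) (by simp; omega)
    simpa using this
  have hhead : G.Adj v (L[0]'(by omega)) := by
    have := List.isChain_iff_getElem.mp hchain 0 (by simp; omega)
    simpa using this
  have hslen : p.support.length = L.length + 1 := by
    rw [SimpleGraph.Walk.length_support]; omega
  have hlast : L[L.length - 1]'(by omega) = v := by
    have h2 : L[L.length - 1]'(by omega) = p.support[L.length - 1 + 1]'(by omega) :=
      List.getElem_tail _
    have h4 : L.length - 1 + 1 = p.support.length - 1 := by omega
    rw [h2]
    have h5 : p.support[p.support.length - 1]'(by omega) = v := by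
      rw [← List.getLast_eq_getElem]; exact p.getLast_support
    simp only [h4]
    exact h5
  apply three_colorable_aux _ L.length (by rw [Nat.even_iff] at heven; omega)
    (fun w => L.idxOf w.val)
    (fun w => List.idxOf_lt_length_iff.mpr w.2)
    (fun w₁ w₂ h => Subtype.ext ((List.idxOf_inj w₁.2).mp h))
  have h0len : 0 < L.length := by omega
  have hm1len : L.length - 1 < L.length := by omega
  rintro ⟨u, hu⟩ ⟨w₁, hw₁⟩ ⟨w₂, hw₂⟩ ha1 ha2 hn1 hn2
  simp only [SimpleGraph.comap_adj, Function.Embedding.coe_subtype] at ha1 ha2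
  simp only at hn1 hn2
  obtain ⟨i, hi, hueq, hidef⟩ : ∃ i, ∃ h : i < L.length, L[i]'h = u ∧ L.idxOf u = i :=
    ⟨List.idxOf u L, List.idxOf_lt_length_iff.mpr hu, List.getElem_idxOf _, rfl⟩
  rw [hidef] at hn1 hn2
  obtain ⟨a, haa, hia⟩ : ∃ a, G.Adj u a ∧
      (L.idxOf a = i + 1 ∨
        (L.idxOf a = 0 ∧ i + 1 = L.length)) := by
    rcases Nat.lt_or_ge (i + 1) L.length with h | h
    · refine ⟨L[i + 1]'h, ?_, Or.inl (List.Nodup.idxOf_getElem hnd _ _)⟩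
      rw [← hueq]; exact hstep _ h
    · have hieq : i = L.length - 1 := by omega
      refine ⟨L[0]'h0len, ?_, Or.inr ⟨List.Nodup.idxOf_getElem hnd _ _, by omega⟩⟩
      have huv : u = v := by
        rw [← hueq]; simp only [hieq]; exact hlast
      rw [huv]; exact hhead
  obtain ⟨b, hbb, hib⟩ : ∃ b, G.Adj u b ∧
      (L.idxOf b + 1 = i ∨
        (L.idxOf b + 1 = L.length ∧ i = 0)) := by
    rcases Nat.eq_zero_or_pos i with h0 | h0
    · refine ⟨L[L.length - 1]'hm1len, ?_,
        Or.inr ⟨by rw [List.Nodup.idxOf_getElem hnd]; omega, h0⟩⟩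
      have huv : u = L[0]'h0len := by rw [← hueq]; simp only [h0]
      rw [huv, hlast]
      exact hhead.symm
    · have h' : i - 1 + 1 < L.length := by omega
      refine ⟨L[i - 1]'(Nat.lt_of_le_of_lt (Nat.sub_le _ _) hi), ?_,
        Or.inl (by rw [List.Nodup.idxOf_getElem hnd]; omega)⟩
      have hadj2 := hstep (i - 1) h'
      have he : i - 1 + 1 = i := by omega
      simp only [he] at hadj2
      rw [← hueq]
      exact hadj2.symm
  have hna : nearP L.length i (L.idxOf a) := by simp only [nearP]; omega
  have hnb : nearP L.length i (L.idxOf b) := by simp only [nearP]; omega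
  have hab : a ≠ b := by
    intro h
    have hll : L.idxOf a = L.idxOf b := by rw [h]
    omega
  have hw1a : w₁ ≠ a := fun h => hn1 (by rw [h]; exact hna)
  have hw1b : w₁ ≠ b := fun h => hn1 (by rw [h]; exact hnb)
  have hw2a : w₂ ≠ a := fun h => hn2 (by rw [h]; exact hna)
  have hw2b : w₂ ≠ b := fun h => hn2 (by rw [h]; exact hnb)
  exact Subtype.ext (cubic_two_other hcubic haa hbb hab ha1 ha2 hw1a hw1b hw2a hw2b)

lemma path_colorable {V : Type*} [Fintype V] [DecidableEq V] {G : SimpleGraph V}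
    (hcubic : IsCubic G) {v : V} (p : G.Walk v v) (hp : p.IsCycle)
    (hodd : Odd p.length) :
    ThreeEdgeColorable (G.induce {w | w ∈ p.support.tail.dropLast}) := by
  set M := p.support.tail with hM
  set L := M.dropLast with hLdef
  have hndM : M.Nodup := hp.support_nodup
  have hlenM : M.length = p.length := by
    rw [hM, List.length_tail, SimpleGraph.Walk.length_support]; omega
  have h3 : 3 ≤ M.length := hlenM ▸ hp.three_le_length
  have hlenL : L.length = M.length - 1 := by rw [hLdef, List.length_dropLast]
  have h2L : 2 ≤ L.length := by omega
  have hnd : L.Nodup := hndM.sublist (List.dropLast_sublist M)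
  have hchain : List.Chain' G.Adj (v :: M) := by
    rw [hM, ← SimpleGraph.Walk.support_eq_cons]; exact p.isChain_adj_support
  have hstepM : ∀ i, ∀ h : i + 1 < M.length, G.Adj (M[i]'(by omega)) (M[i+1]'h) := by
    intro i h
    have := List.isChain_iff_getElem.mp hchain (i+1) (by simp; omega)
    simpa using this
  have hheadM : G.Adj v (M[0]'(by omega)) := by
    have := List.isChain_iff_getElem.mp hchain 0 (by simp; omega)
    simpa using this
  have hslen : p.support.length = M.length + 1 := by
    rw [SimpleGraph.Walk.length_support]; omega
  have hlastM : M[M.length - 1]'(by omega) = v := by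
    have h2 : M[M.length - 1]'(by omega) = p.support[M.length - 1 + 1]'(by omega) :=
      List.getElem_tail _
    have h4 : M.length - 1 + 1 = p.support.length - 1 := by omega
    rw [h2]
    have h5 : p.support[p.support.length - 1]'(by omega) = v := by
      rw [← List.getLast_eq_getElem]; exact p.getLast_support
    simp only [h4]
    exact h5
  have hLM : ∀ i, ∀ h : i < L.length, L[i]'h = M[i]'(by rw [hlenL] at h; omega) :=
    fun i h => List.getElem_dropLast h
  have hstepL : ∀ i, ∀ h : i + 1 < L.length, G.Adj (L[i]'(by omega)) (L[i+1]'h) := by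
    intro i h
    rw [hLM i (by omega), hLM (i+1) h]
    exact hstepM i (by omega)
  have hMne : M ≠ [] := by intro h; rw [h] at h3; simp at h3
  have hgl : M.getLast hMne = v := by
    rw [List.getLast_eq_getElem]; exact hlastM
  have hvnotL : v ∉ L := by
    have hnd2 : (M.dropLast ++ [M.getLast hMne]).Nodup := by
      rw [List.dropLast_append_getLast hMne]; exact hndM
    rw [List.nodup_append] at hnd2
    exact fun hvL => hnd2.2.2 v hvL v (by rw [hgl]; exact List.mem_singleton_self v) rfl
  apply three_colorable_aux _ L.length
    (by rw [Nat.odd_iff] at hodd; omega)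
    (fun w => L.idxOf w.val)
    (fun w => List.idxOf_lt_length_iff.mpr w.2)
    (fun w₁ w₂ h => Subtype.ext ((List.idxOf_inj w₁.2).mp h))
  rintro ⟨u, hu⟩ ⟨w₁, hw₁⟩ ⟨w₂, hw₂⟩ ha1 ha2 hn1 hn2
  simp only [SimpleGraph.comap_adj, Function.Embedding.coe_subtype] at ha1 ha2
  simp only at hn1 hn2
  obtain ⟨i, hi, hueq, hidef⟩ : ∃ i, ∃ h : i < L.length, L[i]'h = u ∧ L.idxOf u = i :=
    ⟨List.idxOf u L, List.idxOf_lt_length_iff.mpr hu, List.getElem_idxOf _, rfl⟩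
  rw [hidef] at hn1 hn2
  obtain ⟨x1, x2, hx1, hx2, hx12, p1, p2⟩ : ∃ x1 x2, G.Adj u x1 ∧ G.Adj u x2 ∧ x1 ≠ x2 ∧
      (x1 ∉ L ∨ nearP L.length i (L.idxOf x1)) ∧
      (x2 ∉ L ∨ nearP L.length i (L.idxOf x2)) := by
    rcases Nat.lt_or_ge (i + 1) L.length with hA | hA
    · rcases Nat.eq_zero_or_pos i with h0 | h0
      · -- i = 0 : x1 = L[i+1], x2 = v
        refine ⟨L[i+1]'hA, v, ?_, ?_, ?_, Or.inr ?_, Or.inl hvnotL⟩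
        · rw [← hueq]; exact hstepL i hA
        · have huv : u = M[0]'(by omega) := by
            rw [← hueq, hLM i hi]; simp only [h0]
          rw [huv]; exact hheadM.symm
        · intro hh; exact hvnotL (hh ▸ List.getElem_mem _)
        · rw [List.Nodup.idxOf_getElem hnd]; exact Or.inl rfl
      · -- interior : x1 = L[i+1], x2 = L[i-1]
        have h' : i - 1 + 1 < L.length := by omega
        refine ⟨L[i+1]'hA, L[i-1]'(Nat.lt_of_le_of_lt (Nat.sub_le _ _) hi),
          ?_, ?_, ?_, Or.inr ?_, Or.inr ?_⟩
        · rw [← hueq]; exact hstepL i hA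
        · have hadj2 := hstepL (i - 1) h'
          have he : i - 1 + 1 = i := by omega
          simp only [he] at hadj2
          rw [← hueq]
          exact hadj2.symm
        · intro hh
          have h1 : L.idxOf (L[i+1]'hA) = i + 1 := List.Nodup.idxOf_getElem hnd _ _
          have h2 : L.idxOf (L[i-1]'(Nat.lt_of_le_of_lt (Nat.sub_le _ _) hi)) = i - 1 :=
            List.Nodup.idxOf_getElem hnd _ _
          rw [hh] at h1
          omega
        · rw [List.Nodup.idxOf_getElem hnd]; exact Or.inl rfl
        · rw [List.Nodup.idxOf_getElem hnd]; exact Or.inr (Or.inl (by omega))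
    · -- i = L.length - 1 : x1 = L[i-1], x2 = v
      have h' : i - 1 + 1 < L.length := by omega
      refine ⟨L[i-1]'(Nat.lt_of_le_of_lt (Nat.sub_le _ _) hi), v,
        ?_, ?_, ?_, Or.inr ?_, Or.inl hvnotL⟩
      · have hadj2 := hstepL (i - 1) h'
        have he : i - 1 + 1 = i := by omega
        simp only [he] at hadj2
        rw [← hueq]
        exact hadj2.symm
      · have h'' : i + 1 < M.length := by omega
        have hadj3 := hstepM i h''
        have hi1 : i + 1 = M.length - 1 := by omega
        simp only [hi1] at hadj3
        rw [hlastM] at hadj3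
        rw [← hueq, hLM i hi]
        exact hadj3
      · intro hh; exact hvnotL (hh ▸ List.getElem_mem _)
      · rw [List.Nodup.idxOf_getElem hnd]; exact Or.inr (Or.inl (by omega))
  have hw1a : w₁ ≠ x1 := by
    rintro rfl
    rcases p1 with h | h
    · exact h hw₁
    · exact hn1 h
  have hw1b : w₁ ≠ x2 := by
    rintro rfl
    rcases p2 with h | h
    · exact h hw₁
    · exact hn1 h
  have hw2a : w₂ ≠ x1 := by
    rintro rfl
    rcases p1 with h | h
    · exact h hw₂
    · exact hn2 h
  have hw2b : w₂ ≠ x2 := by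
    rintro rfl
    rcases p2 with h | h
    · exact h hw₂
    · exact hn2 h
  exact Subtype.ext (cubic_two_other hcubic hx1 hx2 hx12 ha1 ha2 hw1a hw1b hw2a hw2b)


lemma resistance_le_list {V : Type*} [Fintype V] [DecidableEq V] (G : SimpleGraph V)
    (L : List V) (hnd : L.Nodup)
    (hcol : ThreeEdgeColorable (G.induce {w | w ∈ L})) :
    resistance G ≤ Fintype.card V - L.length := by
  apply Nat.sInf_le
  refine ⟨{w | w ∈ L}ᶜ, ?_, ?_⟩
  · have h1 : ({w | w ∈ L} : Set V).ncard = L.length := by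
      have he : ({w | w ∈ L} : Set V) = ↑L.toFinset := by ext x; simp
      rw [he, Set.ncard_coe_finset, List.toFinset_card_of_nodup hnd]
    have h2 := Set.ncard_add_ncard_compl ({w | w ∈ L} : Set V) (Set.toFinite _) (Set.toFinite _)
    rw [Nat.card_eq_fintype_card] at h2
    omega
  · rw [compl_compl]; exact hcol


/-- A cubic graph on `n` vertices containing a cycle of length `c` has resistance at
most `n - c` if `c` is even, and at most `n - c + 1` if `c` is odd. In particular the
circumference deficit `ξ(G) = n - circumference G` satisfies `ξ(G) ≥ ρ(G)` when it is
even, and `ξ(G) ≥ ρ(G) - 1` in general. -/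
theorem resistance_le_circumference_deficit {V : Type*} [Fintype V]
    (G : SimpleGraph V) (hcubic : IsCubic G) (n : ℕ) (hn : n = Fintype.card V)
    (c : ℕ) (hc : ∃ (v : V) (p : G.Walk v v), p.IsCycle ∧ p.length = c) :
    ((Even c → resistance G ≤ n - c) ∧ (Odd c → resistance G ≤ n - c + 1)) ∧
    (Even (n - circumference G) → resistance G ≤ n - circumference G) ∧
    resistance G - 1 ≤ n - circumference G := by
  classical
  have main : ∀ c' : ℕ, (∃ (v : V) (p : G.Walk v v), p.IsCycle ∧ p.length = c') →
      (Even c' → resistance G ≤ n - c') ∧ (Odd c' → resistance G ≤ n - c' + 1) := by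
    rintro c' ⟨v, p, hp, rfl⟩
    have hlen : p.support.tail.length = p.length := by
      rw [List.length_tail, SimpleGraph.Walk.length_support]; omega
    have h3 : 3 ≤ p.length := hp.three_le_length
    have hcard : p.length ≤ Fintype.card V := by
      have := hp.support_nodup.length_le_card
      omega
    constructor
    · intro hev
      have h := cycle_colorable hcubic p hp hev
      have hres := resistance_le_list G _ hp.support_nodup h
      rw [hlen] at hres
      rw [hn]; exact hres
    · intro hodd
      have h := path_colorable hcubic p hp hodd
      have hndL : p.support.tail.dropLast.Nodup :=
        hp.support_nodup.sublist (List.dropLast_sublist _)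
      have hres := resistance_le_list G _ hndL h
      have hlenL : p.support.tail.dropLast.length = p.length - 1 := by
        rw [List.length_dropLast]; omega
      rw [hlenL] at hres
      rw [hn]
      have : Fintype.card V - (p.length - 1) = Fintype.card V - p.length + 1 := by omega
      rw [this] at hres
      exact hres
  have hbdd : BddAbove {m | ∃ (v : V) (p : G.Walk v v), p.IsCycle ∧ p.length = m} := by
    refine ⟨Fintype.card V, ?_⟩
    rintro m ⟨v, p, hp, rfl⟩
    have h1 := hp.support_nodup.length_le_card
    have h2 : p.support.tail.length = p.length := by
      rw [List.length_tail, SimpleGraph.Walk.length_support]; omega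
    omega
  have hmem : circumference G ∈ {m | ∃ (v : V) (p : G.Walk v v), p.IsCycle ∧ p.length = m} :=
    Nat.sSup_mem ⟨c, hc⟩ hbdd
  have hmain₀ := main (circumference G) hmem
  have hcm_le : circumference G ≤ n := by
    obtain ⟨v, p, hp, hl⟩ := hmem
    have h1 := hp.support_nodup.length_le_card
    have h2 : p.support.tail.length = p.length := by
      rw [List.length_tail, SimpleGraph.Walk.length_support]; omega
    omega
  have hneven : Even n := hn ▸ cubic_even_card hcubic
  refine ⟨main c hc, ?_, ?_⟩
  · intro hevd
    have hcme : Even (circumference G) := by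
      rw [Nat.even_iff] at hneven hevd ⊢
      omega
    exact hmain₀.1 hcme
  · rcases Nat.even_or_odd (circumference G) with he | ho
    · have := hmain₀.1 he; omega
    · have := hmain₀.2 ho; omega
end
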